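/- arXiv:1511.08054 — 7 statements merged into one kernel-verified Lean document; each statement's English description precedes it below -/
import Mathlib

section
/- For every finite graph G, f_∞(G) ≤ τ(G), where τ(G) is the minimum size of a vertex cover of G. Equivalently: if G has a vertex cover of size k, then for every distance function d on G there is a realization of (G,d) in ℓ_∞^k. -/
/-- `d` is a distance function on the graph `G`. -/
def IsDistFn {V : Type*} (G : SimpleGraph V) (d : V → V → ℝ) : Prop :=
  (∀ x y, d x y = d y x) ∧ (∀ x y, G.Adj x y → 0 ≤ d x y) ∧
  (∀ x y, G.Adj x y → ∀ p : G.Walk x y,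
    d x y ≤ (p.darts.map fun e => d e.toProd.1 e.toProd.2).sum)

section Aux

variable {V : Type*} (G : SimpleGraph V) (d : V → V → ℝ)

/-- Weight of a walk. -/
noncomputable def wtAux {x y : V} (p : G.Walk x y) : ℝ :=
  (p.darts.map fun e => d e.toProd.1 e.toProd.2).sum

/-- Set of weights of walks from `c` to `v`. -/
def wsAux (c v : V) : Set ℝ := {r | ∃ p : G.Walk c v, wtAux G d p = r}

/-- Shortest-walk distance from `c` to `v` (0 if unreachable). -/
noncomputable def fAux (c v : V) : ℝ := sInf (wsAux G d c v)

variable {G d}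

lemma wt_nonneg (hnn : ∀ x y, G.Adj x y → 0 ≤ d x y) {x y : V} (p : G.Walk x y) :
    0 ≤ wtAux G d p := by
  apply List.sum_nonneg
  intro r hr
  obtain ⟨e, he, rfl⟩ := List.mem_map.mp hr
  exact hnn _ _ e.adj

lemma ws_bddBelow (hnn : ∀ x y, G.Adj x y → 0 ≤ d x y) (c v : V) :
    BddBelow (wsAux G d c v) := by
  refine ⟨0, ?_⟩
  rintro r ⟨p, rfl⟩
  exact wt_nonneg hnn p

lemma fAux_self (hnn : ∀ x y, G.Adj x y → 0 ≤ d x y) (c : V) : fAux G d c c = 0 := by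
  refine le_antisymm ?_ ?_
  · exact csInf_le (ws_bddBelow hnn c c) ⟨SimpleGraph.Walk.nil, by simp [wtAux]⟩
  · apply le_csInf (⟨0, SimpleGraph.Walk.nil, by simp [wtAux]⟩ : (wsAux G d c c).Nonempty)
    rintro r ⟨p, rfl⟩
    exact wt_nonneg hnn p

lemma wt_concat {x y z : V} (p : G.Walk x y) (h : G.Adj y z) :
    wtAux G d (p.concat h) = wtAux G d p + d y z := by
  simp [wtAux, SimpleGraph.Walk.darts_concat]

lemma fAux_tri (hsymm : ∀ x y, d x y = d y x) (hnn : ∀ x y, G.Adj x y → 0 ≤ d x y)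
    (c x y : V) (h : G.Adj x y) : fAux G d c x ≤ fAux G d c y + d x y := by
  by_cases hne : (wsAux G d c y).Nonempty
  · rw [← sub_le_iff_le_add]
    apply le_csInf hne
    rintro r ⟨p, rfl⟩
    rw [sub_le_iff_le_add]
    have hmem : wtAux G d p + d y x ∈ wsAux G d c x := ⟨p.concat h.symm, wt_concat p h.symm⟩
    calc fAux G d c x ≤ wtAux G d p + d y x := csInf_le (ws_bddBelow hnn c x) hmem
      _ = wtAux G d p + d x y := by rw [hsymm x y]
  · have hx : wsAux G d c x = ∅ := by
      rw [Set.not_nonempty_iff_eq_empty] at hne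
      by_contra hc
      rw [← Set.not_nonempty_iff_eq_empty, not_not] at hc
      obtain ⟨r, p, _⟩ := hc
      have hmem : wtAux G d (p.concat h) ∈ wsAux G d c y := ⟨p.concat h, rfl⟩
      rw [hne] at hmem
      exact hmem
    have hy : wsAux G d c y = ∅ := Set.not_nonempty_iff_eq_empty.mp hne
    simp only [fAux, hx, hy, Real.sInf_empty]
    simpa using hnn x y h

lemma fAux_edge (hnn : ∀ x y, G.Adj x y → 0 ≤ d x y)
    (hpath : ∀ x y, G.Adj x y → ∀ p : G.Walk x y,
      d x y ≤ (p.darts.map fun e => d e.toProd.1 e.toProd.2).sum)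
    {x y : V} (h : G.Adj x y) : fAux G d x y = d x y := by
  refine le_antisymm ?_ ?_
  · exact csInf_le (ws_bddBelow hnn x y)
      ⟨SimpleGraph.Walk.cons h SimpleGraph.Walk.nil, by simp [wtAux]⟩
  · refine le_csInf ⟨_, SimpleGraph.Walk.cons h SimpleGraph.Walk.nil, rfl⟩ ?_
    rintro r ⟨p, rfl⟩
    exact hpath x y h p

end Aux

/-- `f_∞(G) ≤ τ(G)`: if `G` has a vertex cover `C` of size `k`, then every
distance function on `G` admits a realization in `ℓ_∞^k`. -/
theorem finfty_le_vertexCover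
    {V : Type*} [Fintype V] [DecidableEq V] (G : SimpleGraph V)
    (C : Finset V) (hC : ∀ x y, G.Adj x y → x ∈ C ∨ y ∈ C)
    {k : ℕ} (hk : C.card = k)
    (d : V → V → ℝ) (hd : IsDistFn G d) :
    ∃ q : V → Fin k → ℝ, ∀ x y, G.Adj x y → ‖q x - q y‖ = d x y := by
  obtain ⟨hsymm, hnn, hpath⟩ := hd
  have hcard : Fintype.card C = k := by rw [Fintype.card_coe, hk]
  let e : C ≃ Fin k := Fintype.equivFinOfCardEq hcard
  refine ⟨fun v i => fAux G d (e.symm i : V) v, ?_⟩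
  -- main claim with `x ∈ C`
  have key : ∀ x y, G.Adj x y → x ∈ C →
      ‖(fun i => fAux G d (e.symm i : V) x) - (fun i => fAux G d (e.symm i : V) y)‖ = d x y := by
    intro x y h hx
    refine le_antisymm ?_ ?_
    · apply pi_norm_le_iff_of_nonneg (hnn x y h) |>.2
      intro i
      have t1 := fAux_tri hsymm hnn (e.symm i : V) x y h
      have t2 := fAux_tri hsymm hnn (e.symm i : V) y x h.symm
      rw [hsymm y x] at t2
      simp only [Pi.sub_apply, Real.norm_eq_abs, abs_sub_le_iff]
      constructor <;> linarith
    · have hcoord : ((fun i => fAux G d (e.symm i : V) x)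
          - (fun i => fAux G d (e.symm i : V) y)) (e ⟨x, hx⟩) = -(d x y) := by
        simp only [Pi.sub_apply, Equiv.symm_apply_apply]
        rw [fAux_self hnn x, fAux_edge hnn hpath h]
        ring
      calc d x y = ‖((fun i => fAux G d (e.symm i : V) x)
              - (fun i => fAux G d (e.symm i : V) y)) (e ⟨x, hx⟩)‖ := by
            rw [hcoord, Real.norm_eq_abs, abs_neg, abs_of_nonneg (hnn x y h)]
        _ ≤ _ := norm_le_pi_norm _ _
  intro x y h
  rcases hC x y h with hx | hy
  · exact key x y h hx
  · rw [← norm_neg, neg_sub, hsymm x y]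
    exact key y x h.symm hy
end

section
/- Let G be a graph and d a distance function on G. Every maximal feasible set F ⊆ E(G) contains a spanning forest of G; that is, if F is feasible and no proper superset of F is feasible, then for every edge xy of G, the vertices x and y lie in the same connected component of (V(G), F). -/
/-- A set `F` of edges of `G` is feasible with respect to `d` if some potential
makes every edge of `F` tight (equivalently, `F` has a feasible orientation). -/
def Feasible {V : Type*} (G : SimpleGraph V) (d : V → V → ℝ)
    (F : Set (Sym2 V)) : Prop :=
  ∃ p : V → ℝ, (∀ x y, G.Adj x y → |p x - p y| ≤ d x y) ∧
    ∀ x y, G.Adj x y → s(x, y) ∈ F → |p x - p y| = d x y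

/-- Every maximal feasible set contains a spanning forest: the ends of any edge
of `G` lie in the same component of the spanning subgraph with edge set `F`. -/
theorem maximal_feasible_contains_spanning_forest
    {V : Type*} [Fintype V] (G : SimpleGraph V) (d : V → V → ℝ)
    (hd : IsDistFn G d) (F : Set (Sym2 V)) (hFE : F ⊆ G.edgeSet)
    (hF : Feasible G d F)
    (hmax : ∀ F' : Set (Sym2 V), F ⊆ F' → F' ⊆ G.edgeSet →
      Feasible G d F' → F' = F) :
    ∀ x y, G.Adj x y → (SimpleGraph.fromEdgeSet F).Reachable x y := by
  classical
  obtain ⟨p, hp1, hp2⟩ := hF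
  have hsymm := hd.1
  have hnn := hd.2.1
  intro x y hxy
  by_contra hreach
  set H := SimpleGraph.fromEdgeSet F with hH
  set C : Set V := {v | H.Reachable y v} with hC
  have hyC : y ∈ C := SimpleGraph.Reachable.refl y
  have hxC : x ∉ C := fun hx => hreach hx.symm
  -- F-edges do not cross C
  have hFnc : ∀ a b, s(a, b) ∈ F → (a ∈ C ↔ b ∈ C) := by
    intro a b hab
    have hGab : G.Adj a b := hFE hab
    have hadj : H.Adj a b := by
      rw [hH, SimpleGraph.fromEdgeSet_adj]
      exact ⟨hab, hGab.ne⟩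
    exact ⟨fun h => h.trans hadj.reachable, fun h => h.trans hadj.symm.reachable⟩
  set S : Finset (V × V) :=
    Finset.univ.filter (fun uv => G.Adj uv.1 uv.2 ∧ uv.1 ∉ C ∧ uv.2 ∈ C) with hS
  have hSne : S.Nonempty := ⟨(x, y), by simp [hS, hxy, hxC, hyC]⟩
  set f : V × V → ℝ := fun uv => p uv.1 - p uv.2 + d uv.1 uv.2 with hf
  set t : ℝ := S.inf' hSne f with ht
  have htle : ∀ a b, G.Adj a b → a ∉ C → b ∈ C → t ≤ p a - p b + d a b := by
    intro a b h1 h2 h3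
    have hmem : (a, b) ∈ S := by
      simp only [hS, Finset.mem_filter]
      exact ⟨Finset.mem_univ _, h1, h2, h3⟩
    rw [ht]
    exact Finset.inf'_le f hmem
  have ht0 : 0 ≤ t := by
    apply Finset.le_inf'
    intro uv huv
    simp only [hS, Finset.mem_filter, Finset.mem_univ, true_and] at huv
    have h := abs_le.1 (hp1 uv.1 uv.2 huv.1)
    show 0 ≤ p uv.1 - p uv.2 + d uv.1 uv.2
    linarith [h.1]
  obtain ⟨uv0, huv0S, huv0⟩ := Finset.exists_mem_eq_inf' hSne f
  obtain ⟨u0, v0⟩ := uv0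
  simp only [hS, Finset.mem_filter, Finset.mem_univ, true_and] at huv0S
  obtain ⟨hadj0, hu0, hv0⟩ := huv0S
  set q : V → ℝ := fun v => if v ∈ C then p v + t else p v with hq
  have hq1 : ∀ a b, G.Adj a b → |q a - q b| ≤ d a b := by
    intro a b hab
    have h1 := abs_le.1 (hp1 a b hab)
    by_cases ha : a ∈ C
    · by_cases hb : b ∈ C
      · have e : q a - q b = p a - p b := by by_cases ht' : t = 0 <;> simp [hq, ha, hb, ht'] <;> ring
        rw [e]; exact hp1 a b hab
      · have e : q a - q b = p a - p b + t := by by_cases ht' : t = 0 <;> simp [hq, ha, hb, ht'] <;> ring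
        have h2 := htle b a hab.symm hb ha
        rw [hsymm b a] at h2
        rw [e, abs_le]; constructor <;> linarith [h1.1, h1.2]
    · by_cases hb : b ∈ C
      · have e : q a - q b = p a - p b - t := by by_cases ht' : t = 0 <;> simp [hq, ha, hb, ht'] <;> ring
        have h2 := htle a b hab ha hb
        rw [e, abs_le]; constructor <;> linarith [h1.1, h1.2]
      · have e : q a - q b = p a - p b := by simp [hq, ha, hb]
        rw [e]; exact hp1 a b hab
  have htval : t = p u0 - p v0 + d u0 v0 := by rw [ht, huv0]
  have htight : |q u0 - q v0| = d u0 v0 := by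
    have e : q u0 - q v0 = -(d u0 v0) := by
      simp only [hq, if_neg hu0, if_pos hv0]
      linarith
    rw [e, abs_neg, abs_of_nonneg (hnn _ _ hadj0)]
  set F' : Set (Sym2 V) := insert s(u0, v0) F with hF'
  have hfeas : Feasible G d F' := by
    refine ⟨q, hq1, ?_⟩
    intro a b hab hmem
    rcases Set.mem_insert_iff.1 hmem with heq | hmemF
    · rcases Sym2.eq_iff.1 heq with ⟨rfl, rfl⟩ | ⟨rfl, rfl⟩
      · exact htight
      · rw [abs_sub_comm, htight, hsymm]
    · have hcross := hFnc a b hmemF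
      by_cases ha : a ∈ C
      · have hb := hcross.1 ha
        have e : q a - q b = p a - p b := by by_cases ht' : t = 0 <;> simp [hq, ha, hb, ht'] <;> ring
        rw [e]; exact hp2 a b hab hmemF
      · have hb : b ∉ C := fun h => ha (hcross.2 h)
        have e : q a - q b = p a - p b := by simp [hq, ha, hb]
        rw [e]; exact hp2 a b hab hmemF
  have hFeq : F' = F :=
    hmax F' (Set.subset_insert _ _)
      (Set.insert_subset (G.mem_edgeSet.2 hadj0) hFE) hfeas
  have hmem0 : s(u0, v0) ∈ F := hFeq ▸ Set.mem_insert _ _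
  exact hu0 ((hFnc u0 v0 hmem0).2 hv0)
end

section
/- Let G be a graph and d a distance function on G that is generic, meaning for every cycle C of G and every subset S ⊆ E(C) one has Σ_{e∈S} d_e ≠ Σ_{e∈E(C)∖S} d_e. Then every feasible set F ⊆ E(G) with respect to d is acyclic (a forest). -/
private lemma telescope_aux {V : Type*} {G : SimpleGraph V} (p : V → ℝ) {a b : V}
    (w : G.Walk a b) :
    (w.darts.map (fun dd => p dd.toProd.2 - p dd.toProd.1)).sum = p b - p a := by
  induction w with
  | nil => simp
  | cons h w ih => simp [ih]

private lemma sum_map_neg_aux {α : Type*} (l : List α) (f : α → ℝ) :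
    (l.map (fun x => -f x)).sum = -(l.map f).sum := by
  induction l with
  | nil => simp
  | cons a l ih => simp [ih]; ring

/-- If `d` is generic (for every cycle `C` and every subset `S` of its edges the
`d`-sum over `S` differs from the `d`-sum over the complement), then every
feasible set of edges is acyclic. -/
theorem generic_feasible_is_forest
    {V : Type*} [Fintype V] [DecidableEq V] (G : SimpleGraph V)
    (d : V → V → ℝ) (hd : IsDistFn G d)
    (hsym : ∀ x y, d x y = d y x)
    (hgen : ∀ (v : V) (c : G.Walk v v), c.IsCycle →
      ∀ S ⊆ c.edges.toFinset,
        ∑ e ∈ S, Sym2.lift ⟨d, hsym⟩ e ≠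
        ∑ e ∈ c.edges.toFinset \ S, Sym2.lift ⟨d, hsym⟩ e)
    (F : Set (Sym2 V)) (hFE : F ⊆ G.edgeSet) (hF : Feasible G d F) :
    (SimpleGraph.fromEdgeSet F).IsAcyclic := by
  classical
  obtain ⟨p, hp, htight⟩ := hF
  intro v c hc
  have hle : SimpleGraph.fromEdgeSet F ≤ G := by
    calc SimpleGraph.fromEdgeSet F ≤ SimpleGraph.fromEdgeSet G.edgeSet :=
          SimpleGraph.fromEdgeSet_mono hFE
      _ = G := G.fromEdgeSet_edgeSet
  set c' : G.Walk v v := c.mapLe hle with hc'def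
  have hc' : c'.IsCycle := hc.mapLe hle
  -- edges of c' are the edges of c, which lie in F
  have hedges : c'.edges = c.edges := by
    rw [hc'def, SimpleGraph.Walk.mapLe, SimpleGraph.Walk.edges_map]
    have : Sym2.map ⇑(SimpleGraph.Hom.ofLE hle) = id := by
      funext e
      induction e using Sym2.ind with
      | _ x y => rfl
    rw [this, List.map_id]
  have hmemF : ∀ e ∈ c'.edges, e ∈ F := by
    intro e he
    rw [hedges] at he
    have := c.edges_subset_edgeSet he
    rw [SimpleGraph.edgeSet_fromEdgeSet] at this
    exact this.1
  -- each dart of c' is tight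
  have hdart : ∀ dd ∈ c'.darts, |p dd.toProd.1 - p dd.toProd.2| =
      d dd.toProd.1 dd.toProd.2 := by
    intro dd hdd
    have hadj : G.Adj dd.toProd.1 dd.toProd.2 := dd.adj
    have heF : dd.edge ∈ F := hmemF _ (List.mem_map_of_mem hdd)
    exact htight _ _ hadj heF
  set q : G.Dart → Bool := fun dd => decide (p dd.toProd.1 ≤ p dd.toProd.2) with hq
  set L := c'.darts with hL
  set L1 := L.filter q with hL1
  set L2 := L.filter (fun dd => !q dd) with hL2
  have hnodup : c'.edges.Nodup := hc'.edges_nodup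
  have hedgesL : c'.edges = L.map SimpleGraph.Dart.edge := rfl
  have hperm : List.Perm ((L1 ++ L2).map SimpleGraph.Dart.edge)
      (L.map SimpleGraph.Dart.edge) :=
    (List.filter_append_perm q L).map _
  have hnodup12 : ((L1 ++ L2).map SimpleGraph.Dart.edge).Nodup :=
    hperm.nodup_iff.mpr (hedgesL ▸ hnodup)
  rw [List.map_append] at hnodup12
  set S : Finset (Sym2 V) := (L1.map SimpleGraph.Dart.edge).toFinset with hS
  set T : Finset (Sym2 V) := (L2.map SimpleGraph.Dart.edge).toFinset with hT
  have hST : c'.edges.toFinset = S ∪ T := by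
    rw [hedgesL]
    ext e
    simp only [List.mem_toFinset, Finset.mem_union, hS, hT]
    rw [← hperm.mem_iff, List.map_append, List.mem_append]
  have hdisj : Disjoint S T := by
    rw [hS, hT, List.disjoint_toFinset_iff_disjoint]
    exact List.disjoint_of_nodup_append hnodup12
  have hsub : S ⊆ c'.edges.toFinset := by rw [hST]; exact Finset.subset_union_left
  have hcompl : c'.edges.toFinset \ S = T := by
    rw [hST, Finset.union_sdiff_cancel_left hdisj]
  have hnodup1 : (L1.map SimpleGraph.Dart.edge).Nodup := hnodup12.of_append_left
  have hnodup2 : (L2.map SimpleGraph.Dart.edge).Nodup := hnodup12.of_append_right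
  have hliftedge : ∀ dd : G.Dart, Sym2.lift ⟨d, hsym⟩ dd.edge =
      d dd.toProd.1 dd.toProd.2 := fun dd => rfl
  have hsumS : ∑ e ∈ S, Sym2.lift ⟨d, hsym⟩ e =
      (L1.map (fun dd => d dd.toProd.1 dd.toProd.2)).sum := by
    rw [hS, List.sum_toFinset _ hnodup1, List.map_map]
    rfl
  have hsumT : ∑ e ∈ T, Sym2.lift ⟨d, hsym⟩ e =
      (L2.map (fun dd => d dd.toProd.1 dd.toProd.2)).sum := by
    rw [hT, List.sum_toFinset _ hnodup2, List.map_map]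
    rfl
  -- telescoping
  have htel : (L.map (fun dd => p dd.toProd.2 - p dd.toProd.1)).sum = 0 := by
    rw [hL, telescope_aux]; ring
  have htel' : (L1.map (fun dd => p dd.toProd.2 - p dd.toProd.1)).sum +
      (L2.map (fun dd => p dd.toProd.2 - p dd.toProd.1)).sum = 0 := by
    rw [← List.sum_append, ← List.map_append,
      ((List.filter_append_perm q L).map
        (fun dd => p dd.toProd.2 - p dd.toProd.1)).sum_eq]
    exact htel
  have h1 : (L1.map (fun dd => p dd.toProd.2 - p dd.toProd.1)).sum =
      (L1.map (fun dd => d dd.toProd.1 dd.toProd.2)).sum := by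
    congr 1
    apply List.map_congr_left
    intro dd hdd
    rw [hL1, List.mem_filter] at hdd
    have hqd : p dd.toProd.1 ≤ p dd.toProd.2 := by
      have := hdd.2
      rw [hq] at this
      simpa using this
    have := hdart dd (by rw [hL] at hdd; exact hdd.1)
    rw [abs_of_nonpos (by linarith)] at this
    linarith
  have h2 : (L2.map (fun dd => p dd.toProd.2 - p dd.toProd.1)).sum =
      -(L2.map (fun dd => d dd.toProd.1 dd.toProd.2)).sum := by
    rw [← sum_map_neg_aux]
    congr 1
    apply List.map_congr_left
    intro dd hdd
    rw [hL2, List.mem_filter] at hdd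
    have hqd : ¬ p dd.toProd.1 ≤ p dd.toProd.2 := by
      have := hdd.2
      rw [hq] at this
      simpa using this
    have := hdart dd (by rw [hL] at hdd; exact hdd.1)
    rw [abs_of_nonneg (by linarith [lt_of_not_ge hqd])] at this
    linarith
  refine hgen v c' hc' S hsub ?_
  rw [hcompl, hsumS, hsumT]
  linarith [h1, h2, htel']
end

section
/- For every graph G, f_∞(G) ≥ Υ(G), where Υ(G) is the minimum number of forests needed to partition E(G). Equivalently: if every distance function on G can be realized in ℓ_∞^k, then E(G) can be partitioned into k forests. -/
open Finset in
lemma geomT (T : Finset ℕ) (m : ℕ) (hm : ∀ j ∈ T, m ≤ j) :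
    ∑ j ∈ T, ((4:ℝ)⁻¹)^(j+1) ≤ (1/3) * ((4:ℝ)⁻¹)^m := by
  have hsub : T ⊆ Finset.Ico m (T.sup id + 1) := by
    intro j hj
    simp only [Finset.mem_Ico]
    exact ⟨hm j hj, Nat.lt_succ_of_le (Finset.le_sup (f := id) hj)⟩
  calc ∑ j ∈ T, ((4:ℝ)⁻¹)^(j+1)
      ≤ ∑ j ∈ Finset.Ico m (T.sup id + 1), ((4:ℝ)⁻¹)^(j+1) := by
        apply Finset.sum_le_sum_of_subset_of_nonneg hsub
        intro i _ _; positivity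
    _ = (4:ℝ)⁻¹ * ∑ j ∈ Finset.Ico m (T.sup id + 1), ((4:ℝ)⁻¹)^j := by
        rw [Finset.mul_sum]; apply Finset.sum_congr rfl; intro j _; ring
    _ ≤ (4:ℝ)⁻¹ * (((4:ℝ)⁻¹)^m / (1 - 4⁻¹)) := by
        have := geom_sum_Ico_le_of_lt_one (x := (4:ℝ)⁻¹) (by norm_num) (by norm_num)
          (m := m) (n := T.sup id + 1)
        nlinarith [this]
    _ ≤ (1/3) * ((4:ℝ)⁻¹)^m := by
        rw [show (1:ℝ) - 4⁻¹ = 3/4 by norm_num]; ring_nf; norm_num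

lemma list_abs_sum {α : Type*} (L : List α) (f : α → ℝ) :
    |(L.map f).sum| ≤ (L.map fun a => |f a|).sum := by
  induction L with
  | nil => simp
  | cons a L ih =>
    simp only [List.map_cons, List.sum_cons]
    exact (abs_add_le _ _).trans (by linarith)

lemma list_sum_split (L : List (ℤ × ℕ)) :
    (L.map fun p => (p.1:ℝ) * (1 + ((4:ℝ)⁻¹)^(p.2+1))).sum
      = ((L.map Prod.fst).sum : ℤ) + (L.map fun p => (p.1:ℝ) * ((4:ℝ)⁻¹)^(p.2+1)).sum := by
  induction L with
  | nil => simp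
  | cons a L ih => simp only [List.map_cons, List.sum_cons, ih]; push_cast; ring

lemma listB (L : List (ℤ × ℕ)) (hnd : (L.map Prod.snd).Nodup) (m : ℕ)
    (hm : ∀ p ∈ L, m ≤ p.2) (hs : ∀ p ∈ L, p.1 = 1 ∨ p.1 = -1) :
    |(L.map fun p => (p.1:ℝ) * ((4:ℝ)⁻¹)^(p.2+1)).sum| ≤ (1/3) * ((4:ℝ)⁻¹)^m := by
  have h1 : (L.map fun p : ℤ × ℕ => |(p.1:ℝ) * ((4:ℝ)⁻¹)^(p.2+1)|)
      = L.map fun p => ((4:ℝ)⁻¹)^(p.2+1) := by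
    apply List.map_congr_left
    intro p hp
    rcases hs p hp with h | h <;> rw [abs_mul, h] <;> simp
  have h2 : (L.map fun p : ℤ × ℕ => ((4:ℝ)⁻¹)^(p.2+1)).sum
      = ∑ j ∈ (L.map Prod.snd).toFinset, ((4:ℝ)⁻¹)^(j+1) := by
    rw [List.sum_toFinset _ hnd, List.map_map]
    rfl
  refine (list_abs_sum L _).trans ?_
  rw [h1, h2]
  apply geomT
  intro j hj
  rw [List.mem_toFinset, List.mem_map] at hj
  obtain ⟨p, hp, rfl⟩ := hj
  exact hm p hp

lemma key (L : List (ℤ × ℕ)) (hne : L ≠ []) (hnd : (L.map Prod.snd).Nodup)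
    (hs : ∀ p ∈ L, p.1 = 1 ∨ p.1 = -1) :
    (L.map fun p => (p.1:ℝ) * (1 + ((4:ℝ)⁻¹)^(p.2+1))).sum ≠ 0 := by
  rw [list_sum_split]
  set A : ℤ := (L.map Prod.fst).sum with hA
  have hB := listB L hnd 0 (fun p _ => Nat.zero_le _) hs
  simp only [pow_zero, mul_one] at hB
  rcases eq_or_ne A 0 with hA0 | hA0
  · -- integer part zero; show the fractional part is nonzero
    rw [hA0]
    push_cast
    rw [zero_add]
    -- find an element with minimal exponent
    obtain ⟨p₀, hp₀, hmin⟩ : ∃ p₀ ∈ L, ∀ p ∈ L, p₀.2 ≤ p.2 := by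
      have hTne : (L.map Prod.snd).toFinset.Nonempty := by
        obtain ⟨a, t, rfl⟩ := List.exists_cons_of_ne_nil hne
        exact ⟨a.2, by simp⟩
      set a₀ := (L.map Prod.snd).toFinset.min' hTne with ha₀
      have hmem : a₀ ∈ (L.map Prod.snd).toFinset := Finset.min'_mem _ _
      rw [List.mem_toFinset, List.mem_map] at hmem
      obtain ⟨p₀, hp₀, hp₀2⟩ := hmem
      refine ⟨p₀, hp₀, fun p hp => ?_⟩
      rw [hp₀2]
      exact Finset.min'_le _ _ (by rw [List.mem_toFinset, List.mem_map]; exact ⟨p, hp, rfl⟩)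
    obtain ⟨L₁, L₂, rfl⟩ := List.append_of_mem hp₀
    set L' := L₁ ++ L₂ with hL'
    have hperm : (L₁ ++ p₀ :: L₂).Perm (p₀ :: L') := List.perm_middle
    have hsum : ∀ f : ℤ × ℕ → ℝ, ((L₁ ++ p₀ :: L₂).map f).sum = f p₀ + (L'.map f).sum :=
      fun f => by rw [(hperm.map f).sum_eq]; simp
    have hndc : (p₀.2 :: L'.map Prod.snd).Nodup := by
      have := (hperm.map Prod.snd).nodup_iff.mp
      simpa using this hnd
    have hmemL' : ∀ p ∈ L', p ∈ L₁ ++ p₀ :: L₂ := fun p hp => hperm.mem_iff.mpr (.tail _ hp)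
    have hB' := listB L' (List.nodup_cons.mp hndc).2 (p₀.2 + 1)
      (fun p hp => by
        rcases Nat.lt_or_ge p₀.2 p.2 with h | h
        · omega
        · exfalso
          have heq : p.2 = p₀.2 := le_antisymm h (hmin p (hmemL' p hp))
          exact (List.nodup_cons.mp hndc).1 (heq ▸ List.mem_map.mpr ⟨p, hp, rfl⟩))
      (fun p hp => hs p (hmemL' p hp))
    rw [hsum]
    have ht0 : |(p₀.1:ℝ) * ((4:ℝ)⁻¹)^(p₀.2+1)| = ((4:ℝ)⁻¹)^(p₀.2+1) := by
      rcases hs p₀ hp₀ with h | h <;> rw [abs_mul, h] <;> simp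
    intro hc
    have hL'sum : (L'.map fun p : ℤ × ℕ => (p.1:ℝ) * ((4:ℝ)⁻¹)^(p.2+1)).sum
        = -((p₀.1:ℝ) * ((4:ℝ)⁻¹)^(p₀.2+1)) := by linarith
    rw [hL'sum, abs_neg, ht0] at hB'
    have hpos : (0:ℝ) < ((4:ℝ)⁻¹)^(p₀.2+1) := by positivity
    have hm1 : (1/3:ℝ) * ((4:ℝ)⁻¹)^(p₀.2+1+1) ≤ (1/3:ℝ) * ((4:ℝ)⁻¹)^(p₀.2+1) := by
      apply mul_le_mul_of_nonneg_left _ (by norm_num)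
      apply pow_le_pow_of_le_one (by norm_num) (by norm_num) (by omega)
    nlinarith [hB', hm1, hpos]
  · have h1 : (1:ℝ) ≤ |(A:ℝ)| := by
      rw [← Int.cast_abs]
      exact_mod_cast Int.one_le_abs hA0
    intro hc
    have hsum' : (L.map fun p : ℤ × ℕ => (p.1:ℝ) * ((4:ℝ)⁻¹)^(p.2+1)).sum = -(A:ℝ) := by
      linarith
    rw [hsum', abs_neg] at hB
    linarith


lemma telescope {V : Type*} {H : SimpleGraph V} (f : V → ℝ) {x y : V} (p : H.Walk x y) :
    (p.darts.map fun dd => f dd.toProd.1 - f dd.toProd.2).sum = f x - f y := by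
  induction p with
  | nil => simp
  | cons h q ih => simp only [SimpleGraph.Walk.darts_cons, List.map_cons, List.sum_cons, ih]; ring

lemma norm_attained {k : ℕ} (f : Fin k → ℝ) (hf : f ≠ 0) : ∃ i, |f i| = ‖f‖ := by
  have hk : Nonempty (Fin k) := by
    rcases Nat.eq_zero_or_pos k with rfl | hk
    · exact absurd (funext fun i => i.elim0) hf
    · exact ⟨⟨0, hk⟩⟩
  obtain ⟨i, -, hi⟩ := Finset.exists_mem_eq_sup Finset.univ Finset.univ_nonempty
    (fun b => ‖f b‖₊)
  exact ⟨i, by rw [Pi.norm_def, hi]; simp [Real.norm_eq_abs]⟩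

/-- `f_∞(G) ≥ Υ(G)`: if every distance function on `G` can be realized in
`ℓ_∞^k`, then the edge set of `G` can be partitioned into `k` forests. -/
theorem finfty_ge_arboricity
    {V : Type*} [Fintype V] [DecidableEq V] (G : SimpleGraph V) (k : ℕ)
    (h : ∀ d : V → V → ℝ, IsDistFn G d →
      ∃ q : V → Fin k → ℝ, ∀ x y, G.Adj x y → ‖q x - q y‖ = d x y) :
    ∃ F : Fin k → Set (Sym2 V),
      (⋃ i, F i) = G.edgeSet ∧
      (Pairwise fun i j => Disjoint (F i) (F j)) ∧
      ∀ i, (SimpleGraph.fromEdgeSet (F i)).IsAcyclic := by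
  classical
  set n : Sym2 V → ℕ := fun e => ((Fintype.equivFin (Sym2 V)) e : ℕ) with hn
  have hninj : Function.Injective n := fun a b hab => by
    have := Fin.val_injective hab
    exact (Fintype.equivFin (Sym2 V)).injective this
  set d : V → V → ℝ := fun x y =>
    if G.Adj x y then 1 + ((4:ℝ)⁻¹)^(n s(x,y) + 1) else 0 with hd
  have hd0 : ∀ x y, 0 ≤ d x y := by
    intro x y; simp only [hd]; split <;> positivity
  have hdsymm : ∀ x y, d x y = d y x := by
    intro x y; simp only [hd, G.adj_comm, Sym2.eq_swap]
  have hdadj : ∀ x y, G.Adj x y → d x y = 1 + ((4:ℝ)⁻¹)^(n s(x,y) + 1) := by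
    intro x y hxy; simp only [hd, if_pos hxy]
  have hsmall : ∀ e : Sym2 V, 0 < ((4:ℝ)⁻¹)^(n e + 1) ∧ ((4:ℝ)⁻¹)^(n e + 1) ≤ 1 := by
    intro e
    constructor
    · positivity
    · exact pow_le_one₀ (by norm_num) (by norm_num)
  have hdist : IsDistFn G d := by
    refine ⟨hdsymm, fun x y _ => hd0 x y, ?_⟩
    intro x y hxy p
    cases p with
    | nil => exact absurd rfl hxy.ne
    | cons ha q =>
      cases q with
      | nil => simp
      | cons hb q2 =>
        rename_i w1 w2
        simp only [SimpleGraph.Walk.darts_cons, List.map_cons, List.sum_cons]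
        have h1 := hdadj x w1 ha
        have h2 := hdadj w1 w2 hb
        have h3 : 0 ≤ (q2.darts.map fun e => d e.toProd.1 e.toProd.2).sum := by
          apply List.sum_nonneg
          intro t ht
          obtain ⟨dd, -, rfl⟩ := List.mem_map.mp ht
          exact hd0 _ _
        have := (hsmall s(x,y)).2
        have := (hsmall s(x,w1)).1
        have := (hsmall s(w1,w2)).1
        rw [hdadj x y hxy]
        linarith
  obtain ⟨q, hq⟩ := h d hdist
  -- the coordinate-choice data
  have hP : ∀ x y, G.Adj x y → ∃ i, |q x i - q y i| = d x y := by
    intro x y hxy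
    have hne : q x - q y ≠ 0 := by
      intro hc
      have := hq x y hxy
      rw [hc, norm_zero, hdadj x y hxy] at this
      have := (hsmall s(x,y)).1
      linarith
    obtain ⟨i, hi⟩ := norm_attained _ hne
    exact ⟨i, by simpa [hq x y hxy] using hi⟩
  set c : Sym2 V → Finset (Fin k) := Sym2.lift
    ⟨fun x y => Finset.univ.filter (fun i => |q x i - q y i| = d x y),
     fun x y => by
       ext i
       simp [abs_sub_comm (q x i) (q y i), hdsymm x y]⟩ with hc
  have hcmem : ∀ (x y : V) (i : Fin k), i ∈ c s(x,y) ↔ |q x i - q y i| = d x y := by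
    intro x y i; simp [hc]
  refine ⟨fun i => {e | e ∈ G.edgeSet ∧ (c e).min = (i : WithBot (Fin k))}, ?_, ?_, ?_⟩
  · ext e
    simp only [Set.mem_iUnion, Set.mem_setOf_eq]
    constructor
    · rintro ⟨i, he, -⟩; exact he
    · intro he
      induction e with
      | _ x y =>
        have hxy : G.Adj x y := he
        obtain ⟨i, hi⟩ := hP x y hxy
        have hnonempty : (c s(x,y)).Nonempty := ⟨i, (hcmem x y i).mpr hi⟩
        exact ⟨(c s(x,y)).min' hnonempty, he, (Finset.coe_min' hnonempty).symm⟩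
  · intro i j hij
    rw [Set.disjoint_left]
    rintro e ⟨-, hei⟩ ⟨-, hej⟩
    rw [hei] at hej
    exact hij (WithBot.coe_eq_coe.mp hej)
  · intro i v p hp
    -- each dart of p corresponds to an edge realized in coordinate i
    have hdartedge : ∀ dd : (SimpleGraph.fromEdgeSet _).Dart, dd ∈ p.darts →
        G.Adj dd.toProd.1 dd.toProd.2 ∧
        |q dd.toProd.1 i - q dd.toProd.2 i| = d dd.toProd.1 dd.toProd.2 := by
      intro dd _
      have hadj := dd.adj
      rw [SimpleGraph.fromEdgeSet_adj] at hadj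
      obtain ⟨⟨hedge, hmin⟩, -⟩ := hadj
      have hGadj : G.Adj dd.toProd.1 dd.toProd.2 := hedge
      refine ⟨hGadj, ?_⟩
      have : i ∈ c s(dd.toProd.1, dd.toProd.2) := Finset.mem_of_min hmin
      exact (hcmem _ _ i).mp this
    set L : List (ℤ × ℕ) := p.darts.map
      (fun dd => (if 0 ≤ q dd.toProd.1 i - q dd.toProd.2 i then (1:ℤ) else -1,
        n dd.edge)) with hL
    have hLne : L ≠ [] := by
      intro hc
      have h3 := hp.three_le_length
      have hdnil : p.darts = [] := List.map_eq_nil_iff.mp (hL ▸ hc)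
      have hlen := SimpleGraph.Walk.length_darts p
      rw [hdnil] at hlen
      simp at hlen
      omega
    have hLnd : (L.map Prod.snd).Nodup := by
      rw [hL, List.map_map]
      have h1 : (p.edges.map n).Nodup := hp.edges_nodup.map hninj
      rw [SimpleGraph.Walk.edges, List.map_map] at h1
      exact h1
    have hLs : ∀ pr ∈ L, pr.1 = 1 ∨ pr.1 = -1 := by
      intro pr hpr
      rw [hL] at hpr
      obtain ⟨dd, -, rfl⟩ := List.mem_map.mp hpr
      split <;> simp
    have hzero : (L.map fun pr => (pr.1:ℝ) * (1 + ((4:ℝ)⁻¹)^(pr.2+1))).sum = 0 := by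
      rw [hL, List.map_map]
      have heq : ∀ dd ∈ p.darts,
          ((fun pr : ℤ × ℕ => (pr.1:ℝ) * (1 + ((4:ℝ)⁻¹)^(pr.2+1))) ∘
            (fun dd => ((if 0 ≤ q dd.toProd.1 i - q dd.toProd.2 i then (1:ℤ) else -1),
              n dd.edge))) dd
          = (fun v => q v i) dd.toProd.1 - (fun v => q v i) dd.toProd.2 := by
        intro dd hdd
        obtain ⟨hGadj, habs⟩ := hdartedge dd hdd
        have hedge : dd.edge = s(dd.toProd.1, dd.toProd.2) := rfl
        have hdval := hdadj _ _ hGadj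
        simp only [Function.comp_apply, hedge]
        by_cases hsgn : 0 ≤ q dd.toProd.1 i - q dd.toProd.2 i
        · rw [if_pos hsgn, abs_of_nonneg hsgn] at *
          push_cast
          rw [one_mul, ← hdval]
          exact habs.symm
        · rw [if_neg hsgn] at *
          rw [abs_of_neg (lt_of_not_ge hsgn)] at habs
          push_cast
          linarith [habs, hdval]
      rw [List.map_congr_left heq, telescope (fun v => q v i) p]
      ring
    exact key L hLne hLnd hLs hzero
end

section
/- Let H be a graph with an edge e = uv and let G be obtained from H by adding a new vertex w adjacent exactly to u and v (keeping edge uv). If f_∞(H) ≥ 2, then f_∞(G) = f_∞(H). -/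
/-- `f_∞(G)`: the least `k` such that every distance function on `G` admits a
realization in `ℓ_∞^k`. -/
noncomputable def finfty {V : Type*} [Fintype V] (G : SimpleGraph V) : ℕ :=
  sInf {k : ℕ | ∀ d : V → V → ℝ, IsDistFn G d →
    ∃ q : V → Fin k → ℝ, ∀ x y, G.Adj x y → ‖q x - q y‖ = d x y}

open SimpleGraph

lemma linf_core {k : ℕ} (hk : 2 ≤ k) (p1 p2 : Fin k → ℝ) (a b : ℝ)
    (ha : 0 ≤ a) (hab : a ≤ b)
    (hD1 : ‖p1 - p2‖ ≤ a + b) (hD2 : a ≤ ‖p1 - p2‖ + b) (hD3 : b ≤ ‖p1 - p2‖ + a) :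
    ∃ z : Fin k → ℝ, ‖z - p1‖ = a ∧ ‖z - p2‖ = b := by
  have hb : 0 ≤ b := ha.trans hab
  set w : Fin k → ℝ := p2 - p1 with hwdef
  have hrev : ‖p1 - p2‖ = ‖w‖ := by rw [hwdef, norm_sub_rev]
  rw [hrev] at hD1 hD2 hD3
  have hne : Nonempty (Fin k) := ⟨⟨0, by omega⟩⟩
  obtain ⟨c1, hc1⟩ := Finite.exists_max (fun i => |w i|)
  have hwle : ∀ i, |w i| ≤ ‖w‖ := fun i => by
    simpa [Real.norm_eq_abs] using norm_le_pi_norm w i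
  have hDc1 : |w c1| = ‖w‖ := by
    refine le_antisymm (hwle c1) ?_
    exact (pi_norm_le_iff_of_nonneg (abs_nonneg _)).2 fun j => by
      simpa [Real.norm_eq_abs] using hc1 j
  obtain ⟨c2, hc2⟩ := Fintype.exists_ne_of_one_lt_card (by rw [Fintype.card_fin]; omega) c1
  set ζ : Fin k → ℝ := fun i =>
    if i = c1 then (if 0 ≤ w c1 then w c1 - b else w c1 + b)
    else if i = c2 then (if 0 ≤ w c2 then a else -a)
    else max (-a) (min a (w i)) with hζ
  have hA : ∀ i, |ζ i| ≤ a := by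
    intro i
    by_cases h1 : i = c1
    · subst h1
      simp only [hζ]; rw [if_true]
      rcases le_or_gt 0 (w i) with h | h
      · rw [if_pos h]
        have hwi : w i = ‖w‖ := by rw [← hDc1, abs_of_nonneg h]
        rw [abs_le]; constructor <;> linarith
      · rw [if_neg (not_le.2 h)]
        have hwi : -w i = ‖w‖ := by rw [← hDc1, abs_of_neg h]
        rw [abs_le]; constructor <;> linarith
    · by_cases h2 : i = c2
      · subst h2
        simp only [hζ]; rw [if_neg h1, if_true]
        rcases le_or_gt 0 (w i) with h | h
        · rw [if_pos h, abs_of_nonneg ha]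
        · rw [if_neg (not_le.2 h), abs_neg, abs_of_nonneg ha]
      · simp only [hζ]; rw [if_neg h1, if_neg h2]
        rw [abs_le]
        constructor
        · exact le_max_left _ _
        · exact max_le (by linarith) (min_le_left _ _)
  have hB : |ζ c2| = a := by
    simp only [hζ]; rw [if_neg hc2, if_true]
    rcases le_or_gt 0 (w c2) with h | h
    · rw [if_pos h, abs_of_nonneg ha]
    · rw [if_neg (not_le.2 h), abs_neg, abs_of_nonneg ha]
  have hC : ∀ i, |ζ i - w i| ≤ b := by
    intro i
    obtain ⟨hwi1, hwi2⟩ := abs_le.1 (hwle i)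
    by_cases h1 : i = c1
    · subst h1
      simp only [hζ]; rw [if_true]
      rcases le_or_gt 0 (w i) with h | h
      · rw [if_pos h]
        have he : w i - b - w i = -b := by ring
        rw [he, abs_neg, abs_of_nonneg hb]
      · rw [if_neg (not_le.2 h)]
        have he : w i + b - w i = b := by ring
        rw [he, abs_of_nonneg hb]
    · by_cases h2 : i = c2
      · subst h2
        simp only [hζ]; rw [if_neg h1, if_true]
        rcases le_or_gt 0 (w i) with h | h
        · rw [if_pos h, abs_le]; constructor <;> linarith
        · rw [if_neg (not_le.2 h), abs_le]; constructor <;> linarith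
      · simp only [hζ]; rw [if_neg h1, if_neg h2]
        rcases le_total a (w i) with h | h
        · rw [min_eq_left h, max_eq_right (by linarith : -a ≤ a), abs_le]
          constructor <;> linarith
        · rw [min_eq_right h]
          rcases le_total (-a) (w i) with h' | h'
          · rw [max_eq_right h']; simp [hb]
          · rw [max_eq_left h', abs_le]
            constructor <;> linarith
  have hD4 : |ζ c1 - w c1| = b := by
    simp only [hζ]; rw [if_true]
    rcases le_or_gt 0 (w c1) with h | h
    · rw [if_pos h]
      have he : w c1 - b - w c1 = -b := by ring
      rw [he, abs_neg, abs_of_nonneg hb]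
    · rw [if_neg (not_le.2 h)]
      have he : w c1 + b - w c1 = b := by ring
      rw [he, abs_of_nonneg hb]
  refine ⟨p1 + ζ, ?_, ?_⟩
  · have h0 : p1 + ζ - p1 = ζ := by abel
    rw [h0]
    refine le_antisymm ((pi_norm_le_iff_of_nonneg ha).2 fun i => by
      simpa [Real.norm_eq_abs] using hA i) ?_
    calc a = |ζ c2| := hB.symm
    _ ≤ ‖ζ‖ := by simpa [Real.norm_eq_abs] using norm_le_pi_norm ζ c2
  · have h0 : p1 + ζ - p2 = ζ - w := by rw [hwdef]; abel
    rw [h0]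
    refine le_antisymm ((pi_norm_le_iff_of_nonneg hb).2 fun i => by
      simpa [Real.norm_eq_abs] using hC i) ?_
    calc b = |ζ c1 - w c1| := hD4.symm
    _ ≤ ‖ζ - w‖ := by simpa [Real.norm_eq_abs] using norm_le_pi_norm (ζ - w) c1

lemma linf_point {k : ℕ} (hk : 2 ≤ k) (p1 p2 : Fin k → ℝ) (a b : ℝ)
    (ha : 0 ≤ a) (hb : 0 ≤ b)
    (hD1 : ‖p1 - p2‖ ≤ a + b) (hD2 : a ≤ ‖p1 - p2‖ + b) (hD3 : b ≤ ‖p1 - p2‖ + a) :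
    ∃ z : Fin k → ℝ, ‖z - p1‖ = a ∧ ‖z - p2‖ = b := by
  rcases le_total a b with h | h
  · exact linf_core hk p1 p2 a b ha h hD1 hD2 hD3
  · obtain ⟨z, h1, h2⟩ := linf_core hk p2 p1 b a hb h
      (by rw [norm_sub_rev]; linarith) (by rw [norm_sub_rev]; linarith)
      (by rw [norm_sub_rev]; linarith)
    exact ⟨z, h2, h1⟩

open Classical in
noncomputable def extFn {V : Type*} (u : V) (d : V → V → ℝ) : Option V → Option V → ℝ :=
  fun p q => if p.getD u = q.getD u then 0 else d (p.getD u) (q.getD u)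

lemma darts_sum_nonneg {V : Type*} {G : SimpleGraph V} {d : V → V → ℝ}
    (hd : ∀ x y, G.Adj x y → 0 ≤ d x y) {x y : V} (p : G.Walk x y) :
    0 ≤ (p.darts.map fun e => d e.toProd.1 e.toProd.2).sum := by
  apply List.sum_nonneg
  intro r hr
  obtain ⟨e, _, rfl⟩ := List.mem_map.1 hr
  exact hd _ _ e.adj

lemma restrict_mem {V : Type*} (H : SimpleGraph V) (u v : V) (huv : H.Adj u v)
    (G : SimpleGraph (Option V))
    (hGs : ∀ x y : V, G.Adj (some x) (some y) ↔ H.Adj x y)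
    (hGw : ∀ x : V, G.Adj (some x) none ↔ (x = u ∨ x = v))
    (k : ℕ)
    (hk : ∀ d : Option V → Option V → ℝ, IsDistFn G d →
      ∃ q : Option V → Fin k → ℝ, ∀ x y, G.Adj x y → ‖q x - q y‖ = d x y) :
    ∀ d : V → V → ℝ, IsDistFn H d →
      ∃ q : V → Fin k → ℝ, ∀ x y, H.Adj x y → ‖q x - q y‖ = d x y := by
  intro d hd
  have hadj : ∀ {p q : Option V}, G.Adj p q → p.getD u ≠ q.getD u →
      H.Adj (p.getD u) (q.getD u) := by
    intro p q hpq hne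
    match p, q with
    | some x, some y => exact (hGs x y).1 hpq
    | some x, none =>
      rcases (hGw x).1 hpq with h | h
      · exact absurd h hne
      · subst h; exact huv.symm
    | none, some x =>
      rcases (hGw x).1 hpq.symm with h | h
      · exact absurd h.symm hne
      · subst h; exact huv
    | none, none => exact absurd rfl hpq.ne
  have hnn : ∀ p q : Option V, G.Adj p q → 0 ≤ extFn u d p q := by
    intro p q hpq
    by_cases h : p.getD u = q.getD u
    · simp [extFn, h]
    · simp only [extFn]; rw [if_neg h]
      exact hd.2.1 _ _ (hadj hpq h)
  have key : ∀ (p q : Option V) (P : G.Walk p q), ∃ Q : H.Walk (p.getD u) (q.getD u),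
      (Q.darts.map fun e => d e.toProd.1 e.toProd.2).sum
        ≤ (P.darts.map fun e => extFn u d e.toProd.1 e.toProd.2).sum := by
    intro p q P
    induction P with
    | nil => exact ⟨Walk.nil, by simp⟩
    | @cons x y z hxy P ih =>
      obtain ⟨Q, hQ⟩ := ih
      by_cases hfe : x.getD u = y.getD u
      · refine ⟨Q.copy hfe.symm rfl, ?_⟩
        rw [Walk.darts_copy, Walk.darts_cons, List.map_cons, List.sum_cons]
        have h0 : extFn u d x y = 0 := by simp [extFn, hfe]
        rw [h0]; linarith
      · refine ⟨Walk.cons (hadj hxy hfe) Q, ?_⟩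
        rw [Walk.darts_cons, Walk.darts_cons, List.map_cons, List.map_cons,
          List.sum_cons, List.sum_cons]
        have h0 : extFn u d x y = d (x.getD u) (y.getD u) := by
          simp only [extFn]; rw [if_neg hfe]
        rw [h0]; linarith
  have hdist : IsDistFn G (extFn u d) := by
    refine ⟨?_, hnn, ?_⟩
    · intro p q
      by_cases h : p.getD u = q.getD u
      · simp [extFn, h]
      · simp only [extFn]; rw [if_neg h, if_neg (Ne.symm h)]
        exact hd.1 _ _
    · intro p q hpq P
      obtain ⟨Q, hQ⟩ := key p q P
      by_cases h : p.getD u = q.getD u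
      · have h0 : extFn u d p q = 0 := by simp [extFn, h]
        rw [h0]
        exact le_trans (darts_sum_nonneg hd.2.1 Q) hQ
      · have h0 : extFn u d p q = d (p.getD u) (q.getD u) := by
          simp only [extFn]; rw [if_neg h]
        rw [h0]
        exact le_trans (hd.2.2 _ _ (hadj hpq h) Q) hQ
  obtain ⟨q, hq⟩ := hk (extFn u d) hdist
  refine ⟨fun x => q (some x), fun x y hxy => ?_⟩
  have := hq (some x) (some y) ((hGs x y).2 hxy)
  simpa [extFn, hxy.ne] using this

lemma extend_mem {V : Type*} (H : SimpleGraph V) (u v : V) (huv : H.Adj u v)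
    (G : SimpleGraph (Option V))
    (hGs : ∀ x y : V, G.Adj (some x) (some y) ↔ H.Adj x y)
    (hGw : ∀ x : V, G.Adj (some x) none ↔ (x = u ∨ x = v))
    (k : ℕ) (hk2 : 2 ≤ k)
    (hk : ∀ d : V → V → ℝ, IsDistFn H d →
      ∃ q : V → Fin k → ℝ, ∀ x y, H.Adj x y → ‖q x - q y‖ = d x y) :
    ∀ d : Option V → Option V → ℝ, IsDistFn G d →
      ∃ q : Option V → Fin k → ℝ, ∀ x y, G.Adj x y → ‖q x - q y‖ = d x y := by
  intro d hd
  have hu : G.Adj (some u) none := (hGw u).2 (Or.inl rfl)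
  have hv : G.Adj (some v) none := (hGw v).2 (Or.inr rfl)
  have huv' : G.Adj (some u) (some v) := (hGs u v).2 huv
  have hlift : ∀ (x y : V) (p : H.Walk x y), ∃ P : G.Walk (some x) (some y),
      (P.darts.map fun e => d e.toProd.1 e.toProd.2).sum
        = (p.darts.map fun e => d (some e.toProd.1) (some e.toProd.2)).sum := by
    intro x y p
    induction p with
    | nil => exact ⟨Walk.nil, by simp⟩
    | @cons a c e hab p ih =>
      obtain ⟨P, hP⟩ := ih
      exact ⟨Walk.cons ((hGs a c).2 hab) P, by
        rw [Walk.darts_cons, Walk.darts_cons, List.map_cons, List.map_cons,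
          List.sum_cons, List.sum_cons, hP]⟩
  have hdH : IsDistFn H (fun x y => d (some x) (some y)) := by
    refine ⟨fun x y => hd.1 _ _, fun x y h => hd.2.1 _ _ ((hGs x y).2 h), ?_⟩
    intro x y h p
    obtain ⟨P, hP⟩ := hlift x y p
    have h2 := hd.2.2 _ _ ((hGs x y).2 h) P
    rw [hP] at h2
    exact h2
  obtain ⟨qH, hqH⟩ := hk _ hdH
  have hDuv : ‖qH u - qH v‖ = d (some u) (some v) := hqH u v huv
  have ha : 0 ≤ d (some u) none := hd.2.1 _ _ hu
  have hb : 0 ≤ d (some v) none := hd.2.1 _ _ hv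
  have tri1 : d (some u) (some v) ≤ d (some u) none + d (some v) none := by
    have h1 := hd.2.2 _ _ huv' (Walk.cons hu (Walk.cons hv.symm Walk.nil))
    simp only [Walk.darts_cons, Walk.darts_nil, List.map_cons, List.map_nil,
      List.sum_cons, List.sum_nil] at h1
    have h2 := hd.1 none (some v)
    linarith
  have tri2 : d (some u) none ≤ d (some u) (some v) + d (some v) none := by
    have h1 := hd.2.2 _ _ hu (Walk.cons huv' (Walk.cons hv Walk.nil))
    simp only [Walk.darts_cons, Walk.darts_nil, List.map_cons, List.map_nil,
      List.sum_cons, List.sum_nil] at h1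
    linarith
  have tri3 : d (some v) none ≤ d (some u) (some v) + d (some u) none := by
    have h1 := hd.2.2 _ _ hv (Walk.cons huv'.symm (Walk.cons hu Walk.nil))
    simp only [Walk.darts_cons, Walk.darts_nil, List.map_cons, List.map_nil,
      List.sum_cons, List.sum_nil] at h1
    have h2 := hd.1 (some v) (some u)
    linarith
  obtain ⟨z, hz1, hz2⟩ := linf_point hk2 (qH u) (qH v) (d (some u) none) (d (some v) none)
    ha hb (by rw [hDuv]; exact tri1) (by rw [hDuv]; exact tri2) (by rw [hDuv]; exact tri3)
  refine ⟨fun o => o.elim z qH, ?_⟩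
  intro x y hxy
  rcases x with _ | x <;> rcases y with _ | y
  · exact absurd rfl hxy.ne
  · rcases (hGw y).1 hxy.symm with h | h
    · rw [h]
      show ‖z - qH u‖ = d none (some u)
      rw [hd.1 none (some u)]; exact hz1
    · rw [h]
      show ‖z - qH v‖ = d none (some v)
      rw [hd.1 none (some v)]; exact hz2
  · rcases (hGw x).1 hxy with h | h
    · rw [h]
      show ‖qH u - z‖ = d (some u) none
      rw [norm_sub_rev]; exact hz1
    · rw [h]
      show ‖qH v - z‖ = d (some v) none
      rw [norm_sub_rev]; exact hz2
  · exact hqH x y ((hGs x y).1 hxy)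

/-- Gluing a triangle onto an edge `uv` of `H` (adding a new vertex `w`
adjacent to exactly `u` and `v`) does not change `f_∞`, provided
`f_∞(H) ≥ 2`. -/
theorem finfty_glue_triangle
    {V : Type*} [Fintype V] (H : SimpleGraph V) (u v : V) (huv : H.Adj u v)
    (G : SimpleGraph (Option V))
    (hGs : ∀ x y : V, G.Adj (some x) (some y) ↔ H.Adj x y)
    (hGw : ∀ x : V, G.Adj (some x) none ↔ (x = u ∨ x = v))
    (h2 : 2 ≤ finfty H) :
    finfty G = finfty H := by
  have hSHne : {k : ℕ | ∀ d : V → V → ℝ, IsDistFn H d →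
      ∃ q : V → Fin k → ℝ, ∀ x y, H.Adj x y → ‖q x - q y‖ = d x y}.Nonempty := by
    by_contra hne
    rw [Set.not_nonempty_iff_eq_empty] at hne
    have h0 : finfty H = 0 := by rw [finfty, hne, Nat.sInf_empty]
    omega
  have hmem : finfty H ∈ {k : ℕ | ∀ d : V → V → ℝ, IsDistFn H d →
      ∃ q : V → Fin k → ℝ, ∀ x y, H.Adj x y → ‖q x - q y‖ = d x y} :=
    Nat.sInf_mem hSHne
  have hGmem : finfty H ∈ {k : ℕ | ∀ d : Option V → Option V → ℝ, IsDistFn G d →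
      ∃ q : Option V → Fin k → ℝ, ∀ x y, G.Adj x y → ‖q x - q y‖ = d x y} :=
    extend_mem H u v huv G hGs hGw (finfty H) h2 hmem
  have hle1 : finfty G ≤ finfty H := Nat.sInf_le hGmem
  have hnmem : finfty G ∈ {k : ℕ | ∀ d : Option V → Option V → ℝ, IsDistFn G d →
      ∃ q : Option V → Fin k → ℝ, ∀ x y, G.Adj x y → ‖q x - q y‖ = d x y} :=
    Nat.sInf_mem ⟨_, hGmem⟩
  have hnH : finfty G ∈ {k : ℕ | ∀ d : V → V → ℝ, IsDistFn H d →
      ∃ q : V → Fin k → ℝ, ∀ x y, H.Adj x y → ‖q x - q y‖ = d x y} :=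
    restrict_mem H u v huv G hGs hGw (finfty G) hnmem
  exact le_antisymm hle1 (Nat.sInf_le hnH)
end

section
/- Let G be obtained from a graph H by subdividing one edge (replacing edge uv by a new vertex w adjacent to u and v, and deleting uv). Then f_∞(G) = f_∞(H). -/
open SimpleGraph

namespace FinftyAux


variable {W : Type*} {G₀ : SimpleGraph W}

def wlen (d : W → W → ℝ) {x y : W} (p : G₀.Walk x y) : ℝ :=
  (p.darts.map fun e => d e.toProd.1 e.toProd.2).sum

@[simp] lemma wlen_nil (d : W → W → ℝ) (x : W) :
    wlen d (Walk.nil : G₀.Walk x x) = 0 := rfl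

@[simp] lemma wlen_cons (d : W → W → ℝ) {x y z : W} (h : G₀.Adj x y) (p : G₀.Walk y z) :
    wlen d (Walk.cons h p) = d x y + wlen d p := by
  simp [wlen]

@[simp] lemma wlen_append (d : W → W → ℝ) {x y z : W} (p : G₀.Walk x y) (q : G₀.Walk y z) :
    wlen d (p.append q) = wlen d p + wlen d q := by
  simp [wlen, Walk.darts_append]

lemma wlen_reverse (d : W → W → ℝ) (hsymm : ∀ a b, d a b = d b a) {x y : W} (p : G₀.Walk x y) :
    wlen d p.reverse = wlen d p := by
  unfold wlen
  rw [Walk.darts_reverse, List.map_reverse, List.sum_reverse, List.map_map]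
  congr 1
  apply List.map_congr_left
  intro dd _
  exact (hsymm _ _).symm

@[simp] lemma wlen_copy (d : W → W → ℝ) {x y x' y' : W} (p : G₀.Walk x y)
    (hx : x = x') (hy : y = y') :
    wlen d (p.copy hx hy) = wlen d p := by
  subst hx; subst hy; rfl

lemma wlen_nonneg' {d : W → W → ℝ} {x y : W} (p : G₀.Walk x y)
    (h : ∀ dd ∈ p.darts, 0 ≤ d dd.toProd.1 dd.toProd.2) : 0 ≤ wlen d p := by
  apply List.sum_nonneg
  intro r hr
  obtain ⟨dd, hdd, rfl⟩ := List.mem_map.mp hr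
  exact h dd hdd

lemma wlen_nonneg {d : W → W → ℝ} (h : ∀ a b, G₀.Adj a b → 0 ≤ d a b) {x y : W}
    (p : G₀.Walk x y) : 0 ≤ wlen d p :=
  wlen_nonneg' p (fun dd _ => h _ _ dd.adj)

lemma wlen_congr {d₁ d₂ : W → W → ℝ} {x y : W} (p : G₀.Walk x y)
    (h : ∀ dd ∈ p.darts, d₁ dd.toProd.1 dd.toProd.2 = d₂ dd.toProd.1 dd.toProd.2) :
    wlen d₁ p = wlen d₂ p := by
  unfold wlen
  congr 1
  exact List.map_congr_left h

lemma dart_wlen_le' {d : W → W → ℝ} {x y : W} (p : G₀.Walk x y)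
    (h : ∀ dd ∈ p.darts, 0 ≤ d dd.toProd.1 dd.toProd.2) {dd : G₀.Dart} (hdd : dd ∈ p.darts) :
    d dd.toProd.1 dd.toProd.2 ≤ wlen d p := by
  apply List.single_le_sum
  · intro r hr
    obtain ⟨ee, hee, rfl⟩ := List.mem_map.mp hr
    exact h ee hee
  · exact List.mem_map.mpr ⟨dd, hdd, rfl⟩

lemma wlen_le_of_nodup_subset' {d : W → W → ℝ}
    {x y x' y' : W} {p : G₀.Walk x y} {q : G₀.Walk x' y'}
    (h : ∀ dd ∈ p.darts, 0 ≤ d dd.toProd.1 dd.toProd.2)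
    (hnd : q.darts.Nodup) (hsub : q.darts ⊆ p.darts) :
    wlen d q ≤ wlen d p := by
  obtain ⟨l, hl, hsl⟩ := hnd.subperm hsub
  calc wlen d q = (l.map fun e => d e.toProd.1 e.toProd.2).sum := by
        rw [wlen]; exact (List.Perm.sum_eq (hl.map _)).symm
    _ ≤ wlen d p := by
        apply List.Sublist.sum_le_sum (hsl.map _)
        intro r hr
        obtain ⟨ee, hee, rfl⟩ := List.mem_map.mp hr
        exact h ee hee

lemma path_darts_nodup {x y : W} {p : G₀.Walk x y} (hp : p.IsPath) : p.darts.Nodup := by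
  have h := hp.isTrail.edges_nodup
  rw [Walk.edges] at h
  exact h.of_map _

lemma one_le_wlen {d : W → W → ℝ} (h1 : ∀ a b, G₀.Adj a b → 1 ≤ d a b) {x y : W}
    (hxy : x ≠ y) (p : G₀.Walk x y) : 1 ≤ wlen d p := by
  cases p with
  | nil => exact absurd rfl hxy
  | cons h p' =>
    rw [wlen_cons]
    have h0 := wlen_nonneg' p' (fun dd _ => zero_le_one.trans (h1 _ _ dd.adj))
    linarith [h1 _ _ h]

lemma uvdart_exists {x y u v : W} {p : G₀.Walk x y} (hmem : s(u,v) ∈ p.edges) :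
    ∃ dd ∈ p.darts, (dd.toProd.1 = u ∧ dd.toProd.2 = v) ∨ (dd.toProd.1 = v ∧ dd.toProd.2 = u) := by
  rw [Walk.edges] at hmem
  obtain ⟨dd, hdd, he⟩ := List.mem_map.mp hmem
  exact ⟨dd, hdd, dart_edge_eq_mk'_iff'.mp he⟩

lemma dart_not_uv {x y u v : W} {p : G₀.Walk x y} (hp : s(u,v) ∉ p.edges)
    {dd : G₀.Dart} (hdd : dd ∈ p.darts) :
    ¬(dd.toProd.1 = u ∧ dd.toProd.2 = v) ∧ ¬(dd.toProd.1 = v ∧ dd.toProd.2 = u) := by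
  constructor <;> intro hc <;> exact hp (by
    have : dd.edge = s(u,v) := dart_edge_eq_mk'_iff'.mpr (by tauto)
    rw [← this, Walk.edges]
    exact List.mem_map.mpr ⟨dd, hdd, rfl⟩)

variable {V : Type*} {H : SimpleGraph V} {u v : V} {G : SimpleGraph (Option V)}

open scoped Classical in
noncomputable def dSub (d : Option V → Option V → ℝ) (u v : V) (c : ℝ) : V → V → ℝ :=
  fun x y => if (x = u ∧ y = v) ∨ (x = v ∧ y = u) then c else d (some x) (some y)

lemma dSub_of_uv {d : Option V → Option V → ℝ} {c : ℝ} {x y : V}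
    (h : (x = u ∧ y = v) ∨ (x = v ∧ y = u)) : dSub d u v c x y = c := if_pos h

lemma dSub_of_not {d : Option V → Option V → ℝ} {c : ℝ} {x y : V}
    (h : ¬((x = u ∧ y = v) ∨ (x = v ∧ y = u))) : dSub d u v c x y = d (some x) (some y) :=
  if_neg h

lemma dSub_symm {d : Option V → Option V → ℝ} {c : ℝ}
    (hsym : ∀ α β, d α β = d β α) : ∀ x y, dSub d u v c x y = dSub d u v c y x := by
  intro x y
  by_cases h : (x = u ∧ y = v) ∨ (x = v ∧ y = u)
  · rw [dSub_of_uv h, dSub_of_uv (by tauto)]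
  · rw [dSub_of_not h, dSub_of_not (by tauto), hsym]

/-- lift an `uv`-avoiding walk of `H` to `G`. -/
lemma lift_ex
    (hGs : ∀ x y : V, G.Adj (some x) (some y) ↔
      (H.Adj x y ∧ ¬(x = u ∧ y = v) ∧ ¬(x = v ∧ y = u)))
    (d : Option V → Option V → ℝ) :
    ∀ {x y : V} (p : H.Walk x y), s(u,v) ∉ p.edges →
      ∃ P : G.Walk (some x) (some y),
        wlen d P = wlen (fun a b => d (some a) (some b)) p := by
  intro x y p
  induction p with
  | nil => exact fun _ => ⟨Walk.nil, by simp⟩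
  | @cons x' z' y' h p ih =>
    intro hmem
    rw [Walk.edges_cons, List.mem_cons] at hmem
    push_neg at hmem
    obtain ⟨P', hP'⟩ := ih hmem.2
    have hne : ¬(x' = u ∧ z' = v) ∧ ¬(x' = v ∧ z' = u) := by
      constructor <;> intro hc <;> exact hmem.1 (by
        rw [Sym2.eq_iff]; tauto)
    refine ⟨Walk.cons ((hGs x' z').mpr ⟨h, hne.1, hne.2⟩) P', ?_⟩
    rw [wlen_cons, wlen_cons, hP']

/-- expand an `H`-walk to a `G`-walk, replacing `uv`-darts by a fixed walk `R`. -/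
lemma expand_ex (huv : H.Adj u v)
    (hGs : ∀ x y : V, G.Adj (some x) (some y) ↔
      (H.Adj x y ∧ ¬(x = u ∧ y = v) ∧ ¬(x = v ∧ y = u)))
    {d : Option V → Option V → ℝ} (hsym : ∀ α β, d α β = d β α) {c : ℝ}
    (R : G.Walk (some u) (some v)) (hR : wlen d R = c) :
    ∀ {x y : V} (p : H.Walk x y),
      ∃ P : G.Walk (some x) (some y), wlen d P ≤ wlen (dSub d u v c) p := by
  intro x y p
  induction p with
  | nil => exact ⟨Walk.nil, by simp⟩
  | @cons x' z' y' h p ih =>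
    obtain ⟨P', hP'⟩ := ih
    by_cases hcond : (x' = u ∧ z' = v) ∨ (x' = v ∧ z' = u)
    · rcases hcond with ⟨hx, hz⟩ | ⟨hx, hz⟩
      · refine ⟨(R.copy (by rw [hx]) (by rw [hz])).append P', ?_⟩
        rw [wlen_append, wlen_copy, hR, wlen_cons, dSub_of_uv (Or.inl ⟨hx, hz⟩)]
        linarith
      · refine ⟨(R.reverse.copy (by rw [hx]) (by rw [hz])).append P', ?_⟩
        rw [wlen_append, wlen_copy, wlen_reverse d hsym, hR, wlen_cons,
          dSub_of_uv (Or.inr ⟨hx, hz⟩)]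
        linarith
    · refine ⟨Walk.cons ((hGs x' z').mpr ⟨h, fun hc => hcond (Or.inl hc),
        fun hc => hcond (Or.inr hc)⟩) P', ?_⟩
      rw [wlen_cons, wlen_cons, dSub_of_not hcond]
      linarith

lemma telescope (f : W → ℝ) {x y : W} (p : G₀.Walk x y) :
    (p.darts.map fun dd => f dd.toProd.1 - f dd.toProd.2).sum = f x - f y := by
  induction p with
  | nil => simp
  | cons h p ih => simp only [Walk.darts_cons, List.map_cons, List.sum_cons, ih]; ring

lemma norm_fin1 (g : Fin 1 → ℝ) : ‖g‖ = |g 0| := by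
  apply le_antisymm
  · rw [← Real.norm_eq_abs]
    exact (pi_norm_le_iff_of_nonneg (norm_nonneg _)).mpr fun i => by
      have h : i = 0 := Subsingleton.elim _ _
      rw [h]
  · rw [← Real.norm_eq_abs]; exact norm_le_pi_norm g 0

lemma pm_sum : ∀ l : List ℝ, (∀ x ∈ l, x = 1 ∨ x = -1) →
    ∃ m : ℕ, l.sum = (l.length : ℝ) - 2 * m := by
  intro l
  induction l with
  | nil => exact fun _ => ⟨0, by simp⟩
  | cons a l ih =>
    intro h
    obtain ⟨m, hm⟩ := ih fun x hx => h x (List.mem_cons_of_mem _ hx)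
    rcases h a List.mem_cons_self with rfl | rfl
    · exact ⟨m, by simp [hm]; ring⟩
    · exact ⟨m + 1, by simp [hm]; push_cast; ring⟩

lemma isDistFn_const_one (H' : SimpleGraph W) : IsDistFn H' (fun _ _ => (1:ℝ)) := by
  refine ⟨fun _ _ => rfl, fun _ _ _ => zero_le_one, ?_⟩
  intro x y hxy p
  exact one_le_wlen (fun _ _ _ => le_rfl) hxy.ne p

lemma not_realizable_zero (huv : H.Adj u v)
    (hk : ∀ d' : V → V → ℝ, IsDistFn H d' →
      ∃ q : V → Fin 0 → ℝ, ∀ x y, H.Adj x y → ‖q x - q y‖ = d' x y) : False := by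
  obtain ⟨q, hq⟩ := hk _ (isDistFn_const_one H)
  have h1 := hq u v huv
  have h0 : q u - q v = 0 := by funext i; exact i.elim0
  rw [h0, norm_zero] at h1
  exact zero_ne_one h1

open scoped Classical in
lemma isDistFn_two (huv : H.Adj u v) :
    IsDistFn H (fun x y => if (x = u ∧ y = v) ∨ (x = v ∧ y = u) then (2:ℝ) else 1) := by
  classical
  refine ⟨?_, ?_, ?_⟩
  · intro x y
    beta_reduce
    by_cases h : (x = u ∧ y = v) ∨ (x = v ∧ y = u)
    · rw [if_pos h, if_pos (by tauto)]
    · rw [if_neg h, if_neg (by tauto)]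
  · intro x y _
    beta_reduce
    split <;> norm_num
  · intro x y hxy p
    beta_reduce
    have hone : ∀ a b, H.Adj a b → (1:ℝ) ≤ if (a = u ∧ b = v) ∨ (a = v ∧ b = u) then (2:ℝ) else 1 := by
      intro a b _; split <;> norm_num
    by_cases h : (x = u ∧ y = v) ∨ (x = v ∧ y = u)
    · rw [if_pos h]
      cases p with
      | nil => exact absurd rfl hxy.ne
      | @cons _ z _ h' p' =>
        cases p' with
        | nil =>
          show (2:ℝ) ≤ wlen (fun a b => if (a = u ∧ b = v) ∨ (a = v ∧ b = u) then (2:ℝ) else 1) (Walk.cons h' Walk.nil)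
          rw [wlen_cons, wlen_nil, if_pos h]
          norm_num
        | @cons _ z' _ h'' p'' =>
          show (2:ℝ) ≤ wlen (fun a b => if (a = u ∧ b = v) ∨ (a = v ∧ b = u) then (2:ℝ) else 1) (Walk.cons h' (Walk.cons h'' p''))
          rw [wlen_cons, wlen_cons]
          have h0 := wlen_nonneg'
            (d := fun a b => if (a = u ∧ b = v) ∨ (a = v ∧ b = u) then (2:ℝ) else 1) p''
            (fun dd _ => zero_le_one.trans (hone _ _ dd.adj))
          linarith [hone _ _ h', hone _ _ h'']
    · rw [if_neg h]
      exact one_le_wlen hone hxy.ne p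

lemma not_realizable_one (huv : H.Adj u v) (P : H.Walk u v) (hP : s(u,v) ∉ P.edges)
    (hk : ∀ d' : V → V → ℝ, IsDistFn H d' →
      ∃ q : V → Fin 1 → ℝ, ∀ x y, H.Adj x y → ‖q x - q y‖ = d' x y) : False := by
  classical
  obtain ⟨q0, hq0⟩ := hk _ (isDistFn_const_one H)
  obtain ⟨q2, hq2⟩ := hk _ (isDistFn_two huv)
  set n := P.length with hn
  have key : ∀ (q : V → Fin 1 → ℝ) (D : V → V → ℝ),
      (∀ x y, H.Adj x y → ‖q x - q y‖ = D x y) →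
      (∀ dd ∈ P.darts, D dd.toProd.1 dd.toProd.2 = 1) →
      ∃ m : ℕ, q u 0 - q v 0 = (n : ℝ) - 2 * m := by
    intro q D hq hD
    have hsum := telescope (fun z => q z 0) P
    have hpm : ∀ t ∈ (P.darts.map fun dd => q dd.toProd.1 0 - q dd.toProd.2 0),
        t = 1 ∨ t = -1 := by
      intro t ht
      obtain ⟨dd, hdd, rfl⟩ := List.mem_map.mp ht
      have h1 : |q dd.toProd.1 0 - q dd.toProd.2 0| = 1 := by
        have := hq _ _ dd.adj
        rw [norm_fin1] at this
        simpa [hD dd hdd] using this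
      exact (abs_eq (zero_le_one (α := ℝ))).mp h1
    obtain ⟨m, hm⟩ := pm_sum _ hpm
    refine ⟨m, ?_⟩
    rw [hsum] at hm
    rw [hm, List.length_map, Walk.length_darts]
  obtain ⟨m0, hm0⟩ := key q0 _ hq0 (fun _ _ => rfl)
  obtain ⟨m2, hm2⟩ := key q2 _ hq2 (fun dd hdd => by
    have := dart_not_uv hP hdd
    rw [if_neg (by tauto)])
  have e0 : |q0 u 0 - q0 v 0| = 1 := by
    have := hq0 u v huv
    rw [norm_fin1] at this
    simpa using this
  have e2 : |q2 u 0 - q2 v 0| = 2 := by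
    have := hq2 u v huv
    rw [norm_fin1] at this
    simpa using this
  have hodd : Odd n := by
    rcases (abs_eq (zero_le_one (α := ℝ))).mp e0 with h | h <;> rw [hm0] at h
    · have : (n : ℝ) = 2 * m0 + 1 := by linarith
      have hnat : n = 2 * m0 + 1 := by exact_mod_cast this
      exact ⟨m0, by omega⟩
    · have : (n : ℝ) + 1 = 2 * m0 := by linarith
      have hnat : n + 1 = 2 * m0 := by exact_mod_cast this
      exact ⟨m0 - 1, by omega⟩
  have heven : Even n := by
    rcases (abs_eq (by norm_num : (0:ℝ) ≤ 2)).mp e2 with h | h <;> rw [hm2] at h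
    · have : (n : ℝ) = 2 * m2 + 2 := by linarith
      have hnat : n = 2 * m2 + 2 := by exact_mod_cast this
      exact ⟨m2 + 1, by omega⟩
    · have : (n : ℝ) + 2 = 2 * m2 := by linarith
      have hnat : n + 2 = 2 * m2 := by exact_mod_cast this
      exact ⟨m2 - 1, by omega⟩
  rw [← Nat.not_even_iff_odd] at hodd
  exact hodd heven



lemma exists_norm_coord' {k : ℕ} (hk : 0 < k) (g : Fin k → ℝ) : ∃ i, |g i| = ‖g‖ := by
  obtain ⟨i, _, hi⟩ := Finset.exists_mem_eq_sup Finset.univ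
    (Finset.univ_nonempty_iff.mpr ⟨⟨0, hk⟩⟩) fun b => ‖g b‖₊
  exact ⟨i, by rw [← Real.norm_eq_abs, ← coe_nnnorm, ← coe_nnnorm g, Pi.nnnorm_def, hi]⟩

lemma abs_coord_le {k : ℕ} (g : Fin k → ℝ) (i : Fin k) : |g i| ≤ ‖g‖ := by
  rw [← Real.norm_eq_abs]; exact norm_le_pi_norm g i

lemma place_gen {k : ℕ} (hk : 2 ≤ k) (X Y : Fin k → ℝ) {a b c : ℝ}
    (hb : 0 ≤ b) (hba : b ≤ a) (h1 : a - b ≤ c) (h2 : c ≤ a + b)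
    (hXY : ‖X - Y‖ = c) :
    ∃ Wp : Fin k → ℝ, ‖X - Wp‖ = a ∧ ‖Wp - Y‖ = b := by
  classical
  have ha : 0 ≤ a := hb.trans hba
  have hc : 0 ≤ c := hXY ▸ norm_nonneg _
  obtain ⟨i, hi⟩ := exists_norm_coord' (by omega : 0 < k) (X - Y)
  have hfi : |X i - Y i| = c := by rw [← hXY]; simpa using hi
  have habs : ∀ j, |X j - Y j| ≤ c := fun j => by
    rw [← hXY]; simpa using abs_coord_le (X - Y) j
  set j0 : Fin k := if i = ⟨0, by omega⟩ then ⟨1, by omega⟩ else ⟨0, by omega⟩ with hj0def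
  have hj0 : j0 ≠ i := by
    rw [hj0def]
    split
    · rename_i h; rw [h]; intro hcon; exact absurd (Fin.val_eq_of_eq hcon) (by simp)
    · rename_i h; exact fun hcon => h hcon.symm
  set σ : ℝ := if 0 ≤ X i - Y i then (1:ℝ) else -1 with hσdef
  have hfiσ : X i - Y i = σ * c := by
    rw [hσdef]; split
    · rw [one_mul, ← hfi, abs_of_nonneg (by assumption)]
    · rename_i h; rw [← hfi, abs_of_neg (by linarith [lt_of_not_ge h])]; ring
  have hσabs : |σ| = 1 := by rw [hσdef]; split <;> simp
  set Wp : Fin k → ℝ := fun j =>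
    if j = i then X i - σ * a
    else if j = j0 then Y j + (if 0 ≤ X j - Y j then b else -b)
    else Y j + max (-b) (min b (X j - Y j)) with hWp
  have keyXi : |X i - Wp i| = a := by
    simp only [hWp, if_pos rfl]
    rw [show X i - (X i - σ * a) = σ * a by ring, abs_mul, hσabs, one_mul, abs_of_nonneg ha]
  have keyYi : |Wp i - Y i| ≤ b := by
    simp only [hWp, if_pos rfl]
    rw [show X i - σ * a - Y i = (X i - Y i) - σ * a by ring, hfiσ,
      show σ * c - σ * a = σ * (c - a) by ring, abs_mul, hσabs, one_mul]
    rw [abs_le]; constructor <;> linarith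
  have hWpj0 : Wp j0 = Y j0 + (if 0 ≤ X j0 - Y j0 then b else -b) := by
    simp [hWp, hj0]
  have keyYj0 : |Wp j0 - Y j0| = b := by
    rw [hWpj0]
    split_ifs <;> [skip; skip] <;> rw [show ∀ s:ℝ, Y j0 + s - Y j0 = s from fun s => by ring]
    · exact abs_of_nonneg hb
    · rw [abs_neg]; exact abs_of_nonneg hb
  have keyXj0 : |X j0 - Wp j0| ≤ a := by
    rw [hWpj0]
    have h3 := abs_le.mp (habs j0)
    split_ifs with hs <;> rw [abs_le] <;> constructor <;> linarith [h3.1, h3.2]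
  have keyXj : ∀ j, j ≠ i → j ≠ j0 → |X j - Wp j| ≤ a := by
    intro j hji hjj0
    have hWpj : Wp j = Y j + max (-b) (min b (X j - Y j)) := by
      simp only [hWp, if_neg hji, if_neg hjj0]
    rw [hWpj]
    have h3 := abs_le.mp (habs j)
    rw [abs_le]
    constructor
    · rcases le_total (-b) (X j - Y j) with h'' | h''
      · have : max (-b) (min b (X j - Y j)) ≤ X j - Y j :=
          max_le h'' (min_le_right _ _)
        linarith
      · have h4 : min b (X j - Y j) = X j - Y j := min_eq_right (by linarith)
        rw [h4]
        have h5 : max (-b) (X j - Y j) = -b := max_eq_left h''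
        rw [h5]
        linarith [h3.1]
    · rcases le_total (X j - Y j) b with h' | h'
      · have h4 : min b (X j - Y j) = X j - Y j := min_eq_right h'
        rw [h4]
        have : X j - Y j ≤ max (-b) (X j - Y j) := le_max_right _ _
        linarith
      · have h4 : min b (X j - Y j) = b := min_eq_left h'
        rw [h4]
        have h5 : max (-b) b = b := max_eq_right (by linarith)
        rw [h5]
        linarith [h3.2]
  have keyYj : ∀ j, j ≠ i → j ≠ j0 → |Wp j - Y j| ≤ b := by
    intro j hji hjj0
    have hWpj : Wp j = Y j + max (-b) (min b (X j - Y j)) := by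
      simp only [hWp, if_neg hji, if_neg hjj0]
    rw [hWpj, show Y j + max (-b) (min b (X j - Y j)) - Y j
      = max (-b) (min b (X j - Y j)) from by ring, abs_le]
    exact ⟨le_max_left _ _, max_le (by linarith) (min_le_left _ _)⟩
  refine ⟨Wp, ?_, ?_⟩
  · apply le_antisymm
    · rw [pi_norm_le_iff_of_nonneg ha]
      intro j
      rw [Pi.sub_apply, Real.norm_eq_abs]
      by_cases hji : j = i
      · subst hji; exact keyXi.le
      · by_cases hjj0 : j = j0
        · subst hjj0; exact keyXj0
        · exact keyXj j hji hjj0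
    · calc a = |(X - Wp) i| := by rw [Pi.sub_apply, keyXi]
        _ ≤ ‖X - Wp‖ := abs_coord_le _ _
  · apply le_antisymm
    · rw [pi_norm_le_iff_of_nonneg hb]
      intro j
      rw [Pi.sub_apply, Real.norm_eq_abs]
      by_cases hji : j = i
      · subst hji; exact keyYi
      · by_cases hjj0 : j = j0
        · subst hjj0; exact keyYj0.le
        · exact keyYj j hji hjj0
    · calc b = |(Wp - Y) j0| := by rw [Pi.sub_apply, keyYj0]
        _ ≤ ‖Wp - Y‖ := abs_coord_le _ _


lemma place_seg {k : ℕ} (X Y : Fin k → ℝ) {a b : ℝ}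
    (ha : 0 ≤ a) (hb : 0 ≤ b) (hXY : ‖X - Y‖ = a + b) :
    ∃ Wp : Fin k → ℝ, ‖X - Wp‖ = a ∧ ‖Wp - Y‖ = b := by
  rcases eq_or_lt_of_le (by linarith : (0:ℝ) ≤ a + b) with h0 | h0
  · have hXY' : X = Y := by
      have : ‖X - Y‖ = 0 := by rw [hXY, ← h0]
      rwa [norm_sub_eq_zero_iff] at this
    have ha0 : a = 0 := by linarith [hb]
    have hb0 : b = 0 := by linarith [ha]
    exact ⟨X, by simp [ha0], by simp [hXY', hb0]⟩
  · refine ⟨X + (a / (a + b)) • (Y - X), ?_, ?_⟩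
    · have : X - (X + (a / (a + b)) • (Y - X)) = (-(a / (a + b))) • (Y - X) := by
        module
      rw [this, norm_smul]
      have : ‖Y - X‖ = a + b := by rw [norm_sub_rev, hXY]
      rw [this, Real.norm_eq_abs, abs_neg, abs_of_nonneg (by positivity)]
      field_simp
    · have ht : a / (a + b) - 1 = -(b / (a + b)) := by field_simp; ring
      have : (X + (a / (a + b)) • (Y - X)) - Y = (a / (a + b) - 1) • (Y - X) := by
        module
      rw [this, ht, norm_smul]
      have h2 : ‖Y - X‖ = a + b := by rw [norm_sub_rev, hXY]
      rw [h2, Real.norm_eq_abs, abs_neg, abs_of_nonneg (by positivity)]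
      field_simp


lemma dirA [Fintype V] (huv : H.Adj u v)
    (hGs : ∀ x y : V, G.Adj (some x) (some y) ↔
      (H.Adj x y ∧ ¬(x = u ∧ y = v) ∧ ¬(x = v ∧ y = u)))
    (hGw : ∀ x : V, G.Adj (some x) none ↔ (x = u ∨ x = v)) {k : ℕ}
    (hreal : ∀ d' : V → V → ℝ, IsDistFn H d' →
      ∃ q : V → Fin k → ℝ, ∀ x y, H.Adj x y → ‖q x - q y‖ = d' x y) :
    ∀ d : Option V → Option V → ℝ, IsDistFn G d →
      ∃ q : Option V → Fin k → ℝ, ∀ α β, G.Adj α β → ‖q α - q β‖ = d α β := by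
  classical
  intro d hd
  obtain ⟨hsym, hnn, hwalk⟩ := hd
  have hwalk' : ∀ α β, G.Adj α β → ∀ p : G.Walk α β, d α β ≤ wlen d p := hwalk
  have hadjuw : G.Adj (some u) none := (hGw u).mpr (Or.inl rfl)
  have hadjvw : G.Adj (some v) none := (hGw v).mpr (Or.inr rfl)
  set a := d (some u) none with ha_def
  set b := d (some v) none with hb_def
  have ha : 0 ≤ a := hnn _ _ hadjuw
  have hb : 0 ≤ b := hnn _ _ hadjvw
  set Ruw : G.Walk (some u) (some v) :=
    Walk.cons hadjuw (Walk.cons hadjvw.symm Walk.nil) with hRuw_def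
  have hRuw : wlen d Ruw = a + b := by
    rw [hRuw_def, wlen_cons, wlen_cons, wlen_nil, hsym none (some v)]
    ring
  set e : V → V → ℝ := fun x y => d (some x) (some y) with he_def
  -- generic ingredients
  have hnnH_gen : ∀ c : ℝ, 0 ≤ c → ∀ x y, H.Adj x y → 0 ≤ dSub d u v c x y := by
    intro c hc0 x y hxy
    by_cases hcond : (x = u ∧ y = v) ∨ (x = v ∧ y = u)
    · rw [dSub_of_uv hcond]; exact hc0
    · rw [dSub_of_not hcond]
      exact hnn _ _ ((hGs x y).mpr
        ⟨hxy, fun hc => hcond (Or.inl hc), fun hc => hcond (Or.inr hc)⟩)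
  have hdist_gen : ∀ c : ℝ, 0 ≤ c → ∀ R : G.Walk (some u) (some v), wlen d R = c →
      (∀ p : H.Walk u v, c ≤ wlen (dSub d u v c) p) → IsDistFn H (dSub d u v c) := by
    intro c hc0 R hR huvle
    refine ⟨dSub_symm hsym, hnnH_gen c hc0, ?_⟩
    intro x y hxy p
    show dSub d u v c x y ≤ wlen (dSub d u v c) p
    by_cases hcond : (x = u ∧ y = v) ∨ (x = v ∧ y = u)
    · rw [dSub_of_uv hcond]
      rcases hcond with ⟨hx, hy⟩ | ⟨hx, hy⟩
      · have h2 := huvle (p.copy hx hy)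
        rwa [wlen_copy] at h2
      · have h2 := huvle (p.reverse.copy (by rw [hy]) (by rw [hx]))
        rwa [wlen_copy, wlen_reverse _ (dSub_symm hsym)] at h2
    · rw [dSub_of_not hcond]
      obtain ⟨P, hP⟩ := expand_ex huv hGs hsym R hR p
      exact le_trans (hwalk' _ _ ((hGs x y).mpr
        ⟨hxy, fun hc => hcond (Or.inl hc), fun hc => hcond (Or.inr hc)⟩) P) hP
  have hfinish : ∀ c : ℝ, IsDistFn H (dSub d u v c) →
      (∀ X Y : Fin k → ℝ, ‖X - Y‖ = c → ∃ Wp, ‖X - Wp‖ = a ∧ ‖Wp - Y‖ = b) →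
      ∃ q : Option V → Fin k → ℝ, ∀ α β, G.Adj α β → ‖q α - q β‖ = d α β := by
    intro c hdist hplace
    obtain ⟨q', hq'⟩ := hreal _ hdist
    have hc_uv : ‖q' u - q' v‖ = c := by
      rw [hq' u v huv, dSub_of_uv (Or.inl ⟨rfl, rfl⟩)]
    obtain ⟨Wp, hWu, hWv⟩ := hplace _ _ hc_uv
    refine ⟨fun o => Option.elim o Wp (fun x => q' x), ?_⟩
    intro α β hadj
    match α, β with
    | some x, some y =>
      show ‖q' x - q' y‖ = d (some x) (some y)
      have h1 := (hGs x y).mp hadj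
      rw [hq' x y h1.1, dSub_of_not (by tauto)]
    | some x, none =>
      show ‖q' x - Wp‖ = d (some x) none
      rcases (hGw x).mp hadj with hx | hx
      · rw [hx]; exact hWu
      · rw [hx, norm_sub_rev]; exact hWv
    | none, some y =>
      show ‖Wp - q' y‖ = d none (some y)
      rw [hsym none (some y)]
      rcases (hGw y).mp hadj.symm with hy | hy
      · rw [hy, norm_sub_rev]; exact hWu
      · rw [hy]; exact hWv
    | none, none => exact absurd hadj G.irrefl
  by_cases hpath : ∃ p : H.Walk u v, p.IsPath ∧ s(u,v) ∉ p.edges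
  · -- there is a uv-avoiding path
    obtain ⟨p₀, hp₀path, hp₀avoid⟩ := hpath
    set s : Finset (H.Path u v) :=
      Finset.univ.filter (fun P => s(u,v) ∉ (P : H.Walk u v).edges) with hs_def
    have hs : s.Nonempty := ⟨⟨p₀, hp₀path⟩, by simp [hs_def, hp₀avoid]⟩
    obtain ⟨P₀, hP₀s, hP₀min⟩ := Finset.exists_min_image s
      (fun P => wlen e (P : H.Walk u v)) hs
    have hP₀avoid : s(u,v) ∉ (P₀ : H.Walk u v).edges := by
      have := Finset.mem_filter.mp hP₀s
      exact this.2
    set M := wlen e (P₀ : H.Walk u v) with hM_def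
    obtain ⟨LP, hLP⟩ := lift_ex hGs d (P₀ : H.Walk u v) hP₀avoid
    have hM : wlen d LP = M := hLP
    set c := min (a + b) M with hc_def
    have hab_le : a - b ≤ M := by
      have h1 := hwalk' _ _ hadjuw (LP.append (Walk.cons hadjvw Walk.nil))
      rw [wlen_append, wlen_cons, wlen_nil, hM] at h1
      linarith
    have hba_le : b - a ≤ M := by
      have h1 := hwalk' _ _ hadjvw (LP.reverse.append (Walk.cons hadjuw Walk.nil))
      rw [wlen_append, wlen_reverse d hsym, wlen_cons, wlen_nil, hM] at h1
      linarith
    have hM0 : 0 ≤ M := by linarith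
    have hc0 : 0 ≤ c := le_min (by linarith) hM0
    have h1c : a - b ≤ c := le_min (by linarith) hab_le
    have h2c : b - a ≤ c := le_min (by linarith) hba_le
    have hcab : c ≤ a + b := min_le_left _ _
    have hrepl : ∃ R : G.Walk (some u) (some v), wlen d R = c := by
      rcases le_total (a + b) M with h | h
      · exact ⟨Ruw, by rw [hRuw, hc_def, min_eq_left h]⟩
      · exact ⟨LP, by rw [hM, hc_def, min_eq_right h]⟩
    obtain ⟨R, hR⟩ := hrepl
    have huvle : ∀ p : H.Walk u v, c ≤ wlen (dSub d u v c) p := by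
      intro p
      by_cases hpe : s(u,v) ∈ p.edges
      · obtain ⟨dd, hdd, hor⟩ := uvdart_exists hpe
        have h2 := dart_wlen_le' p (fun ee _ => hnnH_gen c hc0 _ _ ee.adj) hdd
        rwa [dSub_of_uv hor] at h2
      · have hcongr : wlen (dSub d u v c) p = wlen e p :=
          wlen_congr p (fun dd hdd => by
            have h3 := dart_not_uv hpe hdd
            exact dSub_of_not (by tauto))
        rw [hcongr]
        have hbp_avoid : s(u,v) ∉ p.bypass.edges :=
          fun hmem => hpe (p.edges_bypass_subset hmem)
        have hmin : M ≤ wlen e p.bypass := by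
          have hmem : (⟨p.bypass, p.bypass_isPath⟩ : H.Path u v) ∈ s := by
            simp [hs_def, hbp_avoid]
          exact hP₀min _ hmem
        have hnn_darts : ∀ dd ∈ p.darts, 0 ≤ e dd.toProd.1 dd.toProd.2 := by
          intro dd hdd
          have hne := dart_not_uv hpe hdd
          exact hnn _ _ ((hGs _ _).mpr ⟨dd.adj, hne.1, hne.2⟩)
        have hle : wlen e p.bypass ≤ wlen e p :=
          wlen_le_of_nodup_subset' hnn_darts (path_darts_nodup p.bypass_isPath)
            p.darts_bypass_subset
        calc c ≤ M := min_le_right _ _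
          _ ≤ wlen e p.bypass := hmin
          _ ≤ wlen e p := hle
    have hdist := hdist_gen c hc0 R hR huvle
    refine hfinish c hdist ?_
    intro X Y hXY
    rcases eq_or_lt_of_le hcab with hceq | hclt
    · exact place_seg X Y ha hb (hXY.trans hceq)
    · have hk2 : 2 ≤ k := by
        rcases Nat.lt_or_ge k 2 with hlt | hge
        · exfalso
          have hk01 : k = 0 ∨ k = 1 := by omega
          rcases hk01 with rfl | rfl
          · exact not_realizable_zero huv hreal
          · exact not_realizable_one huv p₀ hp₀avoid hreal
        · exact hge
      rcases le_total b a with hba2 | hab2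
      · exact place_gen hk2 X Y hb hba2 (by linarith) hcab hXY
      · obtain ⟨Wp, h1, h2⟩ := place_gen hk2 Y X ha hab2 (by linarith)
          (by linarith) ((norm_sub_rev Y X).trans hXY)
        exact ⟨Wp, (norm_sub_rev X Wp).trans h2, (norm_sub_rev Wp Y).trans h1⟩
  · -- no uv-avoiding path: c = a + b
    have hall : ∀ p : H.Walk u v, s(u,v) ∈ p.edges := by
      intro p
      by_contra hne
      exact hpath ⟨p.bypass, p.bypass_isPath, fun hmem => hne (p.edges_bypass_subset hmem)⟩
    have hc0 : (0:ℝ) ≤ a + b := by linarith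
    have huvle : ∀ p : H.Walk u v, a + b ≤ wlen (dSub d u v (a + b)) p := by
      intro p
      obtain ⟨dd, hdd, hor⟩ := uvdart_exists (hall p)
      have h2 := dart_wlen_le' p (fun ee _ => hnnH_gen _ hc0 _ _ ee.adj) hdd
      rwa [dSub_of_uv hor] at h2
    have hdist := hdist_gen (a + b) hc0 Ruw hRuw huvle
    exact hfinish (a + b) hdist (fun X Y hXY => place_seg X Y ha hb hXY)

open scoped Classical in
noncomputable def dOpt (d' : V → V → ℝ) (u v : V) : Option V → Option V → ℝ
  | some x, some y => d' x y
  | some x, none => if x = u then d' u v else 0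
  | none, some y => if y = u then d' u v else 0
  | none, none => 0

open scoped Classical in
@[simp] lemma dOpt_ss (d' : V → V → ℝ) (u v x y : V) :
    dOpt d' u v (some x) (some y) = d' x y := rfl
open scoped Classical in
@[simp] lemma dOpt_sn (d' : V → V → ℝ) (u v x : V) :
    dOpt d' u v (some x) none = if x = u then d' u v else 0 := rfl
open scoped Classical in
@[simp] lemma dOpt_ns (d' : V → V → ℝ) (u v y : V) :
    dOpt d' u v none (some y) = if y = u then d' u v else 0 := rfl
open scoped Classical in
@[simp] lemma dOpt_nn (d' : V → V → ℝ) (u v : V) :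
    dOpt d' u v none none = 0 := rfl

variable {H : SimpleGraph V} {u v : V} {G : SimpleGraph (Option V)}

lemma contract (huv : H.Adj u v)
    (hGs : ∀ x y : V, G.Adj (some x) (some y) ↔
      (H.Adj x y ∧ ¬(x = u ∧ y = v) ∧ ¬(x = v ∧ y = u)))
    (hGw : ∀ x : V, G.Adj (some x) none ↔ (x = u ∨ x = v))
    (d' : V → V → ℝ) (hsym' : ∀ a b, d' a b = d' b a) (hnnuv : 0 ≤ d' u v) :
    ∀ {α β : Option V} (p : G.Walk α β) {x y : V}, α = some x → β = some y →
      ∃ q : H.Walk x y, wlen d' q ≤ wlen (dOpt d' u v) p := by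
  classical
  have main : ∀ (n : ℕ) {α β : Option V} (p : G.Walk α β), p.length ≤ n →
      ∀ {x y : V}, α = some x → β = some y →
      ∃ q : H.Walk x y, wlen d' q ≤ wlen (dOpt d' u v) p := by
    intro n
    induction n with
    | zero =>
      intro α β p hp x y hα hβ
      cases p with
      | nil =>
        subst hα
        injection hβ with hβ'
        subst hβ'
        exact ⟨Walk.nil, by simp⟩
      | cons h p' => simp at hp
    | succ n ih =>
      intro α β p hp x y hα hβ
      cases p with
      | nil =>
        subst hα
        injection hβ with hβ'
        subst hβ'
        exact ⟨Walk.nil, by simp⟩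
      | @cons _ γ _ h p' =>
        subst hα; subst hβ
        cases γ with
        | some z =>
          have hlen' : p'.length ≤ n := by
            simp only [Walk.length_cons] at hp; omega
          obtain ⟨q', hq'⟩ := ih p' hlen' rfl rfl
          have hadj : H.Adj x z := ((hGs x z).mp h).1
          refine ⟨Walk.cons hadj q', ?_⟩
          simp only [wlen_cons, dOpt_ss]
          linarith
        | none =>
          cases p' with
          | @cons _ γ' _ h2 p'' =>
            cases γ' with
            | none => exact absurd h2 G.irrefl
            | some z =>
              have hxuv : x = u ∨ x = v := (hGw x).mp h
              have hzuv : z = u ∨ z = v := (hGw z).mp (h2.symm)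
              have hlen : p''.length ≤ n := by
                simp only [Walk.length_cons] at hp; omega
              obtain ⟨q'', hq''⟩ := ih p'' hlen rfl rfl
              have hnn2 : 0 ≤ wlen (dOpt d' u v) p'' - wlen d' q'' := by linarith
              have hcost : wlen (dOpt d' u v) (Walk.cons h (Walk.cons h2 p''))
                  = (if x = u then d' u v else 0) + (if z = u then d' u v else 0)
                    + wlen (dOpt d' u v) p'' := by
                simp only [wlen_cons, dOpt_sn, dOpt_ns]; ring
              rw [hcost]
              rcases hxuv with hx | hx <;> rcases hzuv with hz | hz
              · refine ⟨q''.copy (hz.trans hx.symm) rfl, ?_⟩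
                rw [wlen_copy, if_pos hx, if_pos hz]
                linarith
              · refine ⟨Walk.cons (show H.Adj x z by rw [hx, hz]; exact huv) q'', ?_⟩
                rw [wlen_cons, if_pos hx, if_neg (by rw [hz]; exact huv.ne'),
                  show d' x z = d' u v by rw [hx, hz]]
                linarith
              · refine ⟨Walk.cons (show H.Adj x z by rw [hx, hz]; exact huv.symm) q'', ?_⟩
                rw [wlen_cons, if_neg (by rw [hx]; exact huv.ne'), if_pos hz,
                  show d' x z = d' u v by rw [hx, hz]; exact hsym' v u]
                linarith
              · refine ⟨q''.copy (hz.trans hx.symm) rfl, ?_⟩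
                rw [wlen_copy, if_neg (by rw [hx]; exact huv.ne'),
                  if_neg (by rw [hz]; exact huv.ne')]
                linarith
  intro α β p x y hα hβ
  exact main p.length p le_rfl hα hβ

open scoped Classical in
lemma dOpt_symm {d' : V → V → ℝ} (hsym' : ∀ a b, d' a b = d' b a) :
    ∀ a b, dOpt d' u v a b = dOpt d' u v b a := by
  intro a b
  cases a <;> cases b <;> first | rfl | exact hsym' _ _

lemma dOpt_nonneg (huv : H.Adj u v)
    (hGs : ∀ x y : V, G.Adj (some x) (some y) ↔
      (H.Adj x y ∧ ¬(x = u ∧ y = v) ∧ ¬(x = v ∧ y = u)))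
    {d' : V → V → ℝ} (hnn' : ∀ x y, H.Adj x y → 0 ≤ d' x y) :
    ∀ a b, G.Adj a b → 0 ≤ dOpt d' u v a b := by
  classical
  have huv0 : 0 ≤ d' u v := hnn' u v huv
  intro a b hab
  match a, b with
  | some x, some y => exact hnn' _ _ ((hGs x y).mp hab).1
  | some x, none =>
    rw [dOpt_sn]; split
    · exact huv0
    · exact le_rfl
  | none, some y =>
    rw [dOpt_ns]; split
    · exact huv0
    · exact le_rfl
  | none, none => rw [dOpt_nn]

lemma uw_bound (huv : H.Adj u v)
    (hGs : ∀ x y : V, G.Adj (some x) (some y) ↔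
      (H.Adj x y ∧ ¬(x = u ∧ y = v) ∧ ¬(x = v ∧ y = u)))
    (hGw : ∀ x : V, G.Adj (some x) none ↔ (x = u ∨ x = v))
    {d' : V → V → ℝ} (hd' : IsDistFn H d') :
    ∀ (p : G.Walk (some u) none), d' u v ≤ wlen (dOpt d' u v) p := by
  classical
  obtain ⟨hsym', hnn', hwalk'⟩ := hd'
  intro p
  rw [← wlen_reverse (dOpt d' u v) (dOpt_symm hsym') p]
  generalize p.reverse = r
  cases r with
  | @cons _ γ _ h2 r' =>
    cases γ with
    | none => exact absurd h2 G.irrefl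
    | some z =>
      rcases (hGw z).mp h2.symm with hz | hz
      · rw [wlen_cons, dOpt_ns, if_pos hz]
        have := wlen_nonneg (dOpt_nonneg huv hGs hnn') r'
        linarith
      · obtain ⟨q, hq⟩ := contract huv hGs hGw d' hsym' (hnn' u v huv) r' rfl rfl
        rw [wlen_cons, dOpt_ns, if_neg (by rw [hz]; exact huv.ne')]
        have hadj : H.Adj z u := by rw [hz]; exact huv.symm
        have h1 := hwalk' z u hadj q
        have h2' : d' u v = d' z u := by rw [hz]; exact hsym' u v
        have h1' : d' z u ≤ wlen d' q := h1
        linarith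

lemma isDistFn_dOpt (huv : H.Adj u v)
    (hGs : ∀ x y : V, G.Adj (some x) (some y) ↔
      (H.Adj x y ∧ ¬(x = u ∧ y = v) ∧ ¬(x = v ∧ y = u)))
    (hGw : ∀ x : V, G.Adj (some x) none ↔ (x = u ∨ x = v))
    {d' : V → V → ℝ} (hd' : IsDistFn H d') :
    IsDistFn G (dOpt d' u v) := by
  classical
  obtain ⟨hsym', hnn', hwalk'⟩ := hd'
  refine ⟨dOpt_symm hsym', dOpt_nonneg huv hGs hnn', ?_⟩
  intro α β hadj p
  have hwl : ∀ {α' β' : Option V} (p' : G.Walk α' β'),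
      (p'.darts.map fun e => dOpt d' u v e.toProd.1 e.toProd.2).sum = wlen (dOpt d' u v) p' :=
    fun _ => rfl
  rw [hwl p]
  match α, β with
  | some x, some y =>
    obtain ⟨q, hq⟩ := contract huv hGs hGw d' hsym' (hnn' u v huv) p rfl rfl
    have h1 : d' x y ≤ wlen d' q := hwalk' x y ((hGs x y).mp hadj).1 q
    calc dOpt d' u v (some x) (some y) = d' x y := rfl
      _ ≤ wlen d' q := h1
      _ ≤ _ := hq
  | some x, none =>
    rcases (hGw x).mp hadj with hx | hx
    · rw [dOpt_sn, if_pos hx]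
      have := uw_bound huv hGs hGw ⟨hsym', hnn', hwalk'⟩
        (p.copy (by rw [hx]) rfl)
      rwa [wlen_copy] at this
    · rw [dOpt_sn, if_neg (by rw [hx]; exact huv.ne')]
      exact wlen_nonneg (dOpt_nonneg huv hGs hnn') p
  | none, some y =>
    rw [← wlen_reverse (dOpt d' u v) (dOpt_symm hsym') p]
    rcases (hGw y).mp hadj.symm with hy | hy
    · rw [dOpt_ns, if_pos hy]
      have := uw_bound huv hGs hGw ⟨hsym', hnn', hwalk'⟩
        (p.reverse.copy (by rw [hy]) rfl)
      rwa [wlen_copy] at this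
    · rw [dOpt_ns, if_neg (by rw [hy]; exact huv.ne')]
      exact wlen_nonneg (dOpt_nonneg huv hGs hnn') p.reverse
  | none, none => exact absurd hadj G.irrefl

lemma dirB (huv : H.Adj u v)
    (hGs : ∀ x y : V, G.Adj (some x) (some y) ↔
      (H.Adj x y ∧ ¬(x = u ∧ y = v) ∧ ¬(x = v ∧ y = u)))
    (hGw : ∀ x : V, G.Adj (some x) none ↔ (x = u ∨ x = v))
    {k : ℕ}
    (hk : ∀ d : Option V → Option V → ℝ, IsDistFn G d →
      ∃ q : Option V → Fin k → ℝ, ∀ x y, G.Adj x y → ‖q x - q y‖ = d x y) :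
    ∀ d' : V → V → ℝ, IsDistFn H d' →
      ∃ q : V → Fin k → ℝ, ∀ x y, H.Adj x y → ‖q x - q y‖ = d' x y := by
  classical
  intro d' hd'
  obtain ⟨q, hq⟩ := hk (dOpt d' u v) (isDistFn_dOpt huv hGs hGw hd')
  obtain ⟨hsym', hnn', hwalk'⟩ := hd'
  have hvw : q (some v) = q none := by
    have h1 := hq (some v) none ((hGw v).mpr (Or.inr rfl))
    rw [dOpt_sn, if_neg huv.ne'] at h1
    exact sub_eq_zero.mp (norm_eq_zero.mp h1)
  have huw : ‖q (some u) - q none‖ = d' u v := by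
    have h1 := hq (some u) none ((hGw u).mpr (Or.inl rfl))
    rwa [dOpt_sn, if_pos rfl] at h1
  refine ⟨fun x => q (some x), ?_⟩
  intro x y hxy
  show ‖q (some x) - q (some y)‖ = d' x y
  by_cases hxy1 : x = u ∧ y = v
  · obtain ⟨rfl, rfl⟩ := hxy1
    rw [hvw, huw]
  · by_cases hxy2 : x = v ∧ y = u
    · obtain ⟨rfl, rfl⟩ := hxy2
      rw [norm_sub_rev, hvw, huw, hsym']
    · have h1 := hq (some x) (some y) ((hGs x y).mpr ⟨hxy, hxy1, hxy2⟩)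
      rwa [dOpt_ss] at h1


end FinftyAux

/-- Subdividing an edge `uv` of `H` (replacing it by a new vertex `w` adjacent
to exactly `u` and `v`) does not change `f_∞`. -/
theorem finfty_subdivide
    {V : Type*} [Fintype V] (H : SimpleGraph V) (u v : V) (huv : H.Adj u v)
    (G : SimpleGraph (Option V))
    (hGs : ∀ x y : V, G.Adj (some x) (some y) ↔
      (H.Adj x y ∧ ¬(x = u ∧ y = v) ∧ ¬(x = v ∧ y = u)))
    (hGw : ∀ x : V, G.Adj (some x) none ↔ (x = u ∨ x = v)) :
    finfty G = finfty H := by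
  unfold finfty
  congr 1
  ext k
  simp only [Set.mem_setOf_eq]
  constructor
  · intro hkG
    exact FinftyAux.dirB huv hGs hGw hkG
  · intro hkH
    exact FinftyAux.dirA huv hGs hGw hkH
end

section
/- Let W_4 be the wheel on 5 vertices (a 4-cycle 1-2-3-4 plus a hub 5 adjacent to all cycle vertices). Define d by d_{12}=18, d_{23}=17, d_{34}=20, d_{41}=24, and d_{i5}=200 for i=1,2,3,4. Then d is a distance function on W_4, and there exist no points q_1,…,q_5 ∈ ℝ² with ‖q_i - q_j‖_∞ = d_{ij} for all edges ij of W_4. -/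
/-- The wheel `W_4` on 5 vertices: the 4-cycle `0-1-2-3` plus the hub `4`. -/
def W4 : SimpleGraph (Fin 5) :=
  SimpleGraph.fromEdgeSet
    {s(0, 1), s(1, 2), s(2, 3), s(3, 0), s(0, 4), s(1, 4), s(2, 4), s(3, 4)}

lemma W4_adj_iff (i j : Fin 5) : W4.Adj i j ↔
    (s(i,j) = s(0,1) ∨ s(i,j) = s(1,2) ∨ s(i,j) = s(2,3) ∨ s(i,j) = s(3,0) ∨
     s(i,j) = s(0,4) ∨ s(i,j) = s(1,4) ∨ s(i,j) = s(2,4) ∨ s(i,j) = s(3,4)) ∧ i ≠ j := by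
  rw [W4, SimpleGraph.fromEdgeSet_adj]
  simp only [Set.mem_insert_iff, Set.mem_singleton_iff]

/-- The shortest-path metric of the weighted `W4`. -/
noncomputable def DDW4 : Fin 5 → Fin 5 → ℝ :=
  ![![0,18,35,24,200],![18,0,17,37,200],![35,17,0,20,200],![24,37,20,0,200],
    ![200,200,200,200,0]]

lemma walk_bound_W4 {V : Type*} {G : SimpleGraph V} (d D : V → V → ℝ)
    (hzero : ∀ v, D v v = 0)
    (htri : ∀ z w, G.Adj z w → ∀ u, D z u ≤ d z w + D w u) :
    ∀ {x y : V} (p : G.Walk x y),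
      D x y ≤ ((p.darts.map fun e => d e.toProd.1 e.toProd.2).sum) := by
  intro x y p
  induction p with
  | nil => simp [hzero]
  | cons h q ih =>
      simp only [SimpleGraph.Walk.darts_cons, List.map_cons, List.sum_cons]
      calc D _ _ ≤ d _ _ + D _ _ := htri _ _ h _
        _ ≤ _ := by linarith

lemma pinorm_fin2 (v : Fin 2 → ℝ) : ‖v‖ = max |v 0| |v 1| := by
  rw [Pi.norm_def]
  rw [show (Finset.univ : Finset (Fin 2)) = {0, 1} from rfl]
  rw [Finset.sup_insert, Finset.sup_singleton]
  push_cast [NNReal.coe_max]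
  simp [Real.norm_eq_abs, coe_nnnorm]

lemma linf2 (x y : ℝ) : |x + y| + |x - y| = 2 * max |x| |y| := by
  rcases le_total |x| |y| with h|h
  · rw [max_eq_right h]
    rcases abs_cases x with ⟨p,_⟩|⟨p,_⟩ <;> rcases abs_cases y with ⟨p2,_⟩|⟨p2,_⟩ <;>
      rcases abs_cases (x+y) with ⟨r,_⟩|⟨r,_⟩ <;>
      rcases abs_cases (x-y) with ⟨w,_⟩|⟨w,_⟩ <;> linarith
  · rw [max_eq_left h]
    rcases abs_cases x with ⟨p,_⟩|⟨p,_⟩ <;> rcases abs_cases y with ⟨p2,_⟩|⟨p2,_⟩ <;>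
      rcases abs_cases (x+y) with ⟨r,_⟩|⟨r,_⟩ <;>
      rcases abs_cases (x-y) with ⟨w,_⟩|⟨w,_⟩ <;> linarith

lemma l1_of_linf (x y S T c : ℝ) (h : max |x| |y| = c)
    (hS : S = x + y) (hT : T = x - y) : |S| + |T| = 2 * c := by
  rw [hS, hT, linf2, h]

set_option maxHeartbeats 1000000 in
lemma BW4 (s0 s1 s2 s3 t0 t1 t2 t3 : ℝ)
    (hb0 : |s0| + |t0| = 400) (hb1 : |s1| + |t1| = 400)
    (hb2 : |s2| + |t2| = 400) (hb3 : |s3| + |t3| = 400)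
    (h01 : |s0 - s1| + |t0 - t1| = 36)
    (h12 : |s1 - s2| + |t1 - t2| = 34)
    (h23 : |s2 - s3| + |t2 - t3| = 40)
    (h30 : |s3 - s0| + |t3 - t0| = 48)
    (hs : 200 ≤ s0) : False := by
  have n01 := abs_nonneg (t0 - t1)
  have n12 := abs_nonneg (t1 - t2)
  have n23 := abs_nonneg (t2 - t3)
  have n30 := abs_nonneg (t3 - t0)
  obtain ⟨a01l, a01r⟩ := abs_le.mp (show |s0 - s1| ≤ 36 by linarith)
  obtain ⟨a12l, a12r⟩ := abs_le.mp (show |s1 - s2| ≤ 34 by linarith)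
  obtain ⟨a23l, a23r⟩ := abs_le.mp (show |s2 - s3| ≤ 40 by linarith)
  obtain ⟨a30l, a30r⟩ := abs_le.mp (show |s3 - s0| ≤ 48 by linarith)
  rw [abs_of_nonneg (by linarith : (0:ℝ) ≤ s0)] at hb0
  rw [abs_of_nonneg (by linarith : (0:ℝ) ≤ s1)] at hb1
  rw [abs_of_nonneg (by linarith : (0:ℝ) ≤ s2)] at hb2
  rw [abs_of_nonneg (by linarith : (0:ℝ) ≤ s3)] at hb3
  have hu0 : s0 ≤ 400 := by have := abs_nonneg t0; linarith
  have hu1 : s1 ≤ 400 := by have := abs_nonneg t1; linarith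
  have hu2 : s2 ≤ 400 := by have := abs_nonneg t2; linarith
  have hu3 : s3 ≤ 400 := by have := abs_nonneg t3; linarith
  have ht0 : t0 = 400 - s0 ∨ t0 = s0 - 400 := by
    rcases abs_cases t0 with ⟨e,_⟩|⟨e,_⟩
    · exact Or.inl (by linarith)
    · exact Or.inr (by linarith)
  have ht1 : t1 = 400 - s1 ∨ t1 = s1 - 400 := by
    rcases abs_cases t1 with ⟨e,_⟩|⟨e,_⟩
    · exact Or.inl (by linarith)
    · exact Or.inr (by linarith)
  have ht2 : t2 = 400 - s2 ∨ t2 = s2 - 400 := by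
    rcases abs_cases t2 with ⟨e,_⟩|⟨e,_⟩
    · exact Or.inl (by linarith)
    · exact Or.inr (by linarith)
  have ht3 : t3 = 400 - s3 ∨ t3 = s3 - 400 := by
    rcases abs_cases t3 with ⟨e,_⟩|⟨e,_⟩
    · exact Or.inl (by linarith)
    · exact Or.inr (by linarith)
  clear n01 n12 n23 n30 hb0 hb1 hb2 hb3
  rcases ht0 with ht0|ht0 <;> rw [ht0] at h01 h30 <;>
  rcases ht1 with ht1|ht1 <;> rw [ht1] at h01 h12 <;>
  rcases ht2 with ht2|ht2 <;> rw [ht2] at h12 h23 <;>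
  rcases ht3 with ht3|ht3 <;> rw [ht3] at h23 h30 <;>
  (first
    | rw [show (400 - s0) - (400 - s1) = -(s0 - s1) from by ring, abs_neg] at h01
    | rw [show (s0 - 400) - (s1 - 400) = s0 - s1 from by ring] at h01
    | rw [show (400 - s0) - (s1 - 400) = 800 - s0 - s1 from by ring, abs_of_nonneg (by linarith : (0:ℝ) ≤ 800 - s0 - s1)] at h01
    | rw [show (s0 - 400) - (400 - s1) = -(800 - s0 - s1) from by ring, abs_neg, abs_of_nonneg (by linarith : (0:ℝ) ≤ 800 - s0 - s1)] at h01) <;>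
  (first
    | rw [show (400 - s1) - (400 - s2) = -(s1 - s2) from by ring, abs_neg] at h12
    | rw [show (s1 - 400) - (s2 - 400) = s1 - s2 from by ring] at h12
    | rw [show (400 - s1) - (s2 - 400) = 800 - s1 - s2 from by ring, abs_of_nonneg (by linarith : (0:ℝ) ≤ 800 - s1 - s2)] at h12
    | rw [show (s1 - 400) - (400 - s2) = -(800 - s1 - s2) from by ring, abs_neg, abs_of_nonneg (by linarith : (0:ℝ) ≤ 800 - s1 - s2)] at h12) <;>
  (first
    | rw [show (400 - s2) - (400 - s3) = -(s2 - s3) from by ring, abs_neg] at h23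
    | rw [show (s2 - 400) - (s3 - 400) = s2 - s3 from by ring] at h23
    | rw [show (400 - s2) - (s3 - 400) = 800 - s2 - s3 from by ring, abs_of_nonneg (by linarith : (0:ℝ) ≤ 800 - s2 - s3)] at h23
    | rw [show (s2 - 400) - (400 - s3) = -(800 - s2 - s3) from by ring, abs_neg, abs_of_nonneg (by linarith : (0:ℝ) ≤ 800 - s2 - s3)] at h23) <;>
  (first
    | rw [show (400 - s3) - (400 - s0) = -(s3 - s0) from by ring, abs_neg] at h30
    | rw [show (s3 - 400) - (s0 - 400) = s3 - s0 from by ring] at h30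
    | rw [show (400 - s3) - (s0 - 400) = 800 - s3 - s0 from by ring, abs_of_nonneg (by linarith : (0:ℝ) ≤ 800 - s3 - s0)] at h30
    | rw [show (s3 - 400) - (400 - s0) = -(800 - s3 - s0) from by ring, abs_neg, abs_of_nonneg (by linarith : (0:ℝ) ≤ 800 - s3 - s0)] at h30) <;>
  rcases abs_cases (s0 - s1) with ⟨g1,_⟩|⟨g1,_⟩ <;>
  rcases abs_cases (s1 - s2) with ⟨g2,_⟩|⟨g2,_⟩ <;>
  rcases abs_cases (s2 - s3) with ⟨g3,_⟩|⟨g3,_⟩ <;>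
  rcases abs_cases (s3 - s0) with ⟨g4,_⟩|⟨g4,_⟩ <;>
  linarith

/-- The distance function on `W_4` with rim values `18, 17, 20, 24` and spoke
values `200` is a distance function which cannot be realized in `ℓ_∞²`. -/
theorem W4_bad_distance_function
    (d : Fin 5 → Fin 5 → ℝ) (hsym : ∀ i j, d i j = d j i)
    (h01 : d 0 1 = 18) (h12 : d 1 2 = 17) (h23 : d 2 3 = 20) (h30 : d 3 0 = 24)
    (h04 : d 0 4 = 200) (h14 : d 1 4 = 200) (h24 : d 2 4 = 200)
    (h34 : d 3 4 = 200) :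
    IsDistFn W4 d ∧
    ¬ ∃ q : Fin 5 → Fin 2 → ℝ, ∀ i j, W4.Adj i j → ‖q i - q j‖ = d i j := by
  have h10 : d 1 0 = 18 := (hsym 1 0).trans h01
  have h21 : d 2 1 = 17 := (hsym 2 1).trans h12
  have h32 : d 3 2 = 20 := (hsym 3 2).trans h23
  have h03 : d 0 3 = 24 := (hsym 0 3).trans h30
  have h40 : d 4 0 = 200 := (hsym 4 0).trans h04
  have h41 : d 4 1 = 200 := (hsym 4 1).trans h14
  have h42 : d 4 2 = 200 := (hsym 4 2).trans h24
  have h43 : d 4 3 = 200 := (hsym 4 3).trans h34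
  have hd : ∀ z w : Fin 5, W4.Adj z w → d z w = DDW4 z w := by
    intro z w h
    rw [W4_adj_iff] at h
    obtain ⟨h, -⟩ := h
    rcases h with h|h|h|h|h|h|h|h <;> rw [Sym2.eq_iff] at h <;>
      rcases h with ⟨rfl, rfl⟩|⟨rfl, rfl⟩ <;>
      norm_num [DDW4, h01, h12, h23, h30, h04, h14, h24, h34,
        h10, h21, h32, h03, h40, h41, h42, h43] <;> rfl
  have hzero : ∀ v : Fin 5, DDW4 v v = 0 := by
    intro v; fin_cases v <;> norm_num [DDW4]
  have htri0 : ∀ z w, W4.Adj z w → ∀ u, DDW4 z u ≤ DDW4 z w + DDW4 w u := by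
    intro z w hzw u
    rw [W4_adj_iff] at hzw
    fin_cases z <;> fin_cases w <;>
      first
        | exact absurd hzw (by decide)
        | (fin_cases u <;> norm_num [DDW4])
  constructor
  · refine ⟨hsym, ?_, ?_⟩
    · intro x y hxy
      rw [hd x y hxy]
      fin_cases x <;> fin_cases y <;> norm_num [DDW4]
    · intro x y hxy p
      have htri : ∀ z w, W4.Adj z w → ∀ u, DDW4 z u ≤ d z w + DDW4 w u := by
        intro z w h u; rw [hd z w h]; exact htri0 z w h u
      exact le_trans (le_of_eq (hd x y hxy)) (walk_bound_W4 d DDW4 hzero htri p)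
  · rintro ⟨q, hq⟩
    have A01 : W4.Adj 0 1 := by rw [W4_adj_iff]; decide
    have A12 : W4.Adj 1 2 := by rw [W4_adj_iff]; decide
    have A23 : W4.Adj 2 3 := by rw [W4_adj_iff]; decide
    have A30 : W4.Adj 3 0 := by rw [W4_adj_iff]; decide
    have A04 : W4.Adj 0 4 := by rw [W4_adj_iff]; decide
    have A14 : W4.Adj 1 4 := by rw [W4_adj_iff]; decide
    have A24 : W4.Adj 2 4 := by rw [W4_adj_iff]; decide
    have A34 : W4.Adj 3 4 := by rw [W4_adj_iff]; decide
    obtain ⟨s0, hS0⟩ : ∃ a : ℝ, a = (q 0 0 - q 4 0) + (q 0 1 - q 4 1) := ⟨_, rfl⟩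
    obtain ⟨t0, hT0⟩ : ∃ a : ℝ, a = (q 0 0 - q 4 0) - (q 0 1 - q 4 1) := ⟨_, rfl⟩
    obtain ⟨s1, hS1⟩ : ∃ a : ℝ, a = (q 1 0 - q 4 0) + (q 1 1 - q 4 1) := ⟨_, rfl⟩
    obtain ⟨t1, hT1⟩ : ∃ a : ℝ, a = (q 1 0 - q 4 0) - (q 1 1 - q 4 1) := ⟨_, rfl⟩
    obtain ⟨s2, hS2⟩ : ∃ a : ℝ, a = (q 2 0 - q 4 0) + (q 2 1 - q 4 1) := ⟨_, rfl⟩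
    obtain ⟨t2, hT2⟩ : ∃ a : ℝ, a = (q 2 0 - q 4 0) - (q 2 1 - q 4 1) := ⟨_, rfl⟩
    obtain ⟨s3, hS3⟩ : ∃ a : ℝ, a = (q 3 0 - q 4 0) + (q 3 1 - q 4 1) := ⟨_, rfl⟩
    obtain ⟨t3, hT3⟩ : ∃ a : ℝ, a = (q 3 0 - q 4 0) - (q 3 1 - q 4 1) := ⟨_, rfl⟩
    have m01 : max |q 0 0 - q 1 0| |q 0 1 - q 1 1| = 18 := by
      have hh := hq 0 1 A01
      rw [pinorm_fin2] at hh
      simp only [Pi.sub_apply] at hh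
      rw [h01] at hh
      exact hh
    have m12 : max |q 1 0 - q 2 0| |q 1 1 - q 2 1| = 17 := by
      have hh := hq 1 2 A12
      rw [pinorm_fin2] at hh
      simp only [Pi.sub_apply] at hh
      rw [h12] at hh
      exact hh
    have m23 : max |q 2 0 - q 3 0| |q 2 1 - q 3 1| = 20 := by
      have hh := hq 2 3 A23
      rw [pinorm_fin2] at hh
      simp only [Pi.sub_apply] at hh
      rw [h23] at hh
      exact hh
    have m30 : max |q 3 0 - q 0 0| |q 3 1 - q 0 1| = 24 := by
      have hh := hq 3 0 A30
      rw [pinorm_fin2] at hh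
      simp only [Pi.sub_apply] at hh
      rw [h30] at hh
      exact hh
    have m04 : max |q 0 0 - q 4 0| |q 0 1 - q 4 1| = 200 := by
      have hh := hq 0 4 A04
      rw [pinorm_fin2] at hh
      simp only [Pi.sub_apply] at hh
      rw [h04] at hh
      exact hh
    have m14 : max |q 1 0 - q 4 0| |q 1 1 - q 4 1| = 200 := by
      have hh := hq 1 4 A14
      rw [pinorm_fin2] at hh
      simp only [Pi.sub_apply] at hh
      rw [h14] at hh
      exact hh
    have m24 : max |q 2 0 - q 4 0| |q 2 1 - q 4 1| = 200 := by
      have hh := hq 2 4 A24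
      rw [pinorm_fin2] at hh
      simp only [Pi.sub_apply] at hh
      rw [h24] at hh
      exact hh
    have m34 : max |q 3 0 - q 4 0| |q 3 1 - q 4 1| = 200 := by
      have hh := hq 3 4 A34
      rw [pinorm_fin2] at hh
      simp only [Pi.sub_apply] at hh
      rw [h34] at hh
      exact hh
    have hb0 : |s0| + |t0| = 400 := by
      have := l1_of_linf (q 0 0 - q 4 0) (q 0 1 - q 4 1) s0 t0 200 m04 hS0 hT0
      linarith
    have hb1 : |s1| + |t1| = 400 := by
      have := l1_of_linf (q 1 0 - q 4 0) (q 1 1 - q 4 1) s1 t1 200 m14 hS1 hT1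
      linarith
    have hb2 : |s2| + |t2| = 400 := by
      have := l1_of_linf (q 2 0 - q 4 0) (q 2 1 - q 4 1) s2 t2 200 m24 hS2 hT2
      linarith
    have hb3 : |s3| + |t3| = 400 := by
      have := l1_of_linf (q 3 0 - q 4 0) (q 3 1 - q 4 1) s3 t3 200 m34 hS3 hT3
      linarith
    have e01 : |s0 - s1| + |t0 - t1| = 36 := by
      have := l1_of_linf (q 0 0 - q 1 0) (q 0 1 - q 1 1) (s0 - s1) (t0 - t1) 18 m01
        (by rw [hS0, hS1]; ring) (by rw [hT0, hT1]; ring)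
      linarith
    have e12 : |s1 - s2| + |t1 - t2| = 34 := by
      have := l1_of_linf (q 1 0 - q 2 0) (q 1 1 - q 2 1) (s1 - s2) (t1 - t2) 17 m12
        (by rw [hS1, hS2]; ring) (by rw [hT1, hT2]; ring)
      linarith
    have e23 : |s2 - s3| + |t2 - t3| = 40 := by
      have := l1_of_linf (q 2 0 - q 3 0) (q 2 1 - q 3 1) (s2 - s3) (t2 - t3) 20 m23
        (by rw [hS2, hS3]; ring) (by rw [hT2, hT3]; ring)
      linarith
    have e30 : |s3 - s0| + |t3 - t0| = 48 := by
      have := l1_of_linf (q 3 0 - q 0 0) (q 3 1 - q 0 1) (s3 - s0) (t3 - t0) 24 m30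
        (by rw [hS3, hS0]; ring) (by rw [hT3, hT0]; ring)
      linarith
    have habs : 200 ≤ |s0| ∨ 200 ≤ |t0| := by
      rcases le_total |s0| |t0| with h|h
      · exact Or.inr (by linarith)
      · exact Or.inl (by linarith)
    rcases habs with h|h
    · rcases abs_cases s0 with ⟨e,_⟩|⟨e,_⟩
      · exact BW4 s0 s1 s2 s3 t0 t1 t2 t3 hb0 hb1 hb2 hb3 e01 e12 e23 e30 (by linarith)
      · refine BW4 (-s0) (-s1) (-s2) (-s3) t0 t1 t2 t3
          (by rw [abs_neg]; exact hb0) (by rw [abs_neg]; exact hb1)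
          (by rw [abs_neg]; exact hb2) (by rw [abs_neg]; exact hb3)
          (by rw [show -s0 - -s1 = -(s0 - s1) from by ring, abs_neg]; exact e01)
          (by rw [show -s1 - -s2 = -(s1 - s2) from by ring, abs_neg]; exact e12)
          (by rw [show -s2 - -s3 = -(s2 - s3) from by ring, abs_neg]; exact e23)
          (by rw [show -s3 - -s0 = -(s3 - s0) from by ring, abs_neg]; exact e30)
          (by linarith)
    · rcases abs_cases t0 with ⟨e,_⟩|⟨e,_⟩
      · exact BW4 t0 t1 t2 t3 s0 s1 s2 s3 (by linarith) (by linarith) (by linarith)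
          (by linarith) (by linarith [e01]) (by linarith [e12]) (by linarith [e23])
          (by linarith [e30]) (by linarith)
      · refine BW4 (-t0) (-t1) (-t2) (-t3) s0 s1 s2 s3
          (by rw [abs_neg]; linarith) (by rw [abs_neg]; linarith)
          (by rw [abs_neg]; linarith) (by rw [abs_neg]; linarith)
          (by rw [show -t0 - -t1 = -(t0 - t1) from by ring, abs_neg]; linarith [e01])
          (by rw [show -t1 - -t2 = -(t1 - t2) from by ring, abs_neg]; linarith [e12])
          (by rw [show -t2 - -t3 = -(t2 - t3) from by ring, abs_neg]; linarith [e23])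
          (by rw [show -t3 - -t0 = -(t3 - t0) from by ring, abs_neg]; linarith [e30])
          (by linarith)
end
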